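/- arXiv:math/0311257 — 7 statements merged into one kernel-verified Lean document; each statement's English description precedes it below -/
import Mathlib

section
/- The quasi-homomorphism Δ on a free group F with basis X, defined by Δ(w) = 0 for one-syllable words and Δ(v_1⋯v_{m-1}v_m) = Δ(v_1⋯v_{m-1}) + sign(l − k) when the last two syllables are a^{±k}, b^{±l} with a ≠ b ∈ X and k,l ∈ ℕ, satisfies Δ(w) + Δ(w⁻¹) = 0 for every w ∈ F. -/
/-- The list of syllable lengths (exponent magnitudes) of the reduced word of `w`. -/
def syllableLengths {X : Type*} [DecidableEq X] (w : FreeGroup X) : List ℕ :=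
  (w.toWord.splitBy (fun a b => a.1 == b.1)).map List.length

/-- The quasi-homomorphism `Δ`: the sum, over consecutive pairs of syllables
`a^{±k}`, `b^{±l}`, of `sign (l - k)`. -/
def delta {X : Type*} [DecidableEq X] (w : FreeGroup X) : ℤ :=
  ((syllableLengths w).zip (syllableLengths w).tail).foldl
    (fun acc p => acc + Int.sign ((p.2 : ℤ) - (p.1 : ℤ))) 0

namespace DeltaAux

variable {α β : Type*}

/-- Prepend an element to the first group. -/
def consHead (a : α) : List (List α) → List (List α)
  | [] => [[a]]
  | g :: gs => (a :: g) :: gs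

/-- A structural version of `List.splitBy` on a nonempty list. -/
def sb (R : α → α → Bool) : α → List α → List (List α)
  | a, [] => [[a]]
  | a, b :: l => if R a b then consHead a (sb R b l) else [a] :: sb R b l

theorem sb_ne_nil (R : α → α → Bool) (a : α) (l : List α) : sb R a l ≠ [] := by
  cases l with
  | nil => simp [sb]
  | cons b l =>
    simp only [sb]
    split
    · cases h : sb R b l <;> simp [consHead]
    · simp

theorem splitBy_loop_eq (R : α → α → Bool) :
    ∀ (l : List α) (ag : α) (g : List α) (gs : List (List α)),
    List.splitBy.loop R l ag g gs = gs.reverse ++ (sb R ag l).modifyHead (g.reverse ++ ·)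
  | [], ag, g, gs => by simp [List.splitBy.loop, sb]
  | a :: as, ag, g, gs => by
    rw [List.splitBy.loop]
    cases h : R ag a with
    | true =>
      simp only
      rw [splitBy_loop_eq R as a (ag :: g) gs]
      obtain ⟨g', gs', h'⟩ : ∃ g' gs', sb R a as = g' :: gs' := by
        cases hh : sb R a as with
        | nil => exact absurd hh (sb_ne_nil R a as)
        | cons x y => exact ⟨x, y, rfl⟩
      simp [sb, h, h', consHead]
    | false =>
      simp only
      rw [splitBy_loop_eq R as a [] ((ag :: g).reverse :: gs)]
      obtain ⟨g', gs', h'⟩ : ∃ g' gs', sb R a as = g' :: gs' := by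
        cases hh : sb R a as with
        | nil => exact absurd hh (sb_ne_nil R a as)
        | cons x y => exact ⟨x, y, rfl⟩
      simp [sb, h, h']

theorem splitBy_cons (R : α → α → Bool) (a : α) (l : List α) :
    List.splitBy R (a :: l) = sb R a l := by
  rw [List.splitBy, splitBy_loop_eq]
  obtain ⟨g', gs', h'⟩ : ∃ g' gs', sb R a l = g' :: gs' := by
    cases hh : sb R a l with
    | nil => exact absurd hh (sb_ne_nil R a l)
    | cons x y => exact ⟨x, y, rfl⟩
  simp [h']

/-- Increment the head of a list of naturals (or create `[1]`). -/
def bumpHead : List ℕ → List ℕ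
  | [] => [1]
  | n :: ns => (n + 1) :: ns

/-- Increment the last entry of a list of naturals (or create `[1]`). -/
def incLast : List ℕ → List ℕ
  | [] => [1]
  | [n] => [n + 1]
  | n :: m :: ns => n :: incLast (m :: ns)

/-- Syllable lengths directly. -/
def sl (R : α → α → Bool) : α → List α → List ℕ
  | _, [] => [1]
  | a, b :: l => if R a b then bumpHead (sl R b l) else 1 :: sl R b l

theorem sl_ne_nil (R : α → α → Bool) (a : α) (l : List α) : sl R a l ≠ [] := by
  cases l with
  | nil => simp [sl]
  | cons b l =>
    simp only [sl]
    split
    · cases h : sl R b l <;> simp [bumpHead]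
    · simp

theorem map_length_sb (R : α → α → Bool) :
    ∀ (a : α) (l : List α), (sb R a l).map List.length = sl R a l
  | a, [] => rfl
  | a, b :: l => by
    simp only [sb, sl]
    split
    · rw [← map_length_sb R b l]
      cases sb R b l <;> simp [consHead, bumpHead]
    · simp [map_length_sb R b l]

theorem bumpHead_incLast : ∀ ns : List ℕ, bumpHead (incLast ns) = incLast (bumpHead ns)
  | [] => rfl
  | [n] => rfl
  | n :: m :: ns => by simp [incLast, bumpHead]

theorem bumpHead_append_one (ns : List ℕ) (h : ns ≠ []) :
    bumpHead (ns ++ [1]) = bumpHead ns ++ [1] := by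
  cases ns with
  | nil => exact absurd rfl h
  | cons n ns => simp [bumpHead]

theorem one_cons_incLast (ns : List ℕ) (h : ns ≠ []) :
    1 :: incLast ns = incLast (1 :: ns) := by
  cases ns with
  | nil => exact absurd rfl h
  | cons n ns => simp [incLast]

theorem incLast_snoc : ∀ (ns : List ℕ) (n : ℕ), incLast (ns ++ [n]) = ns ++ [n + 1]
  | [], n => rfl
  | [a], n => rfl
  | a :: b :: t, n => by
    have := incLast_snoc (b :: t) n
    simpa [incLast] using this

theorem incLast_reverse : ∀ ns : List ℕ, incLast ns.reverse = (bumpHead ns).reverse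
  | [] => rfl
  | n :: t => by simp [bumpHead, incLast_snoc]

theorem sl_snoc (R : α → α → Bool) :
    ∀ (l : List α) (a b : α),
      sl R a (l ++ [b]) =
        if R ((a :: l).getLast (by simp)) b then incLast (sl R a l)
        else sl R a l ++ [1]
  | [], a, b => by
    simp only [List.nil_append, sl, List.getLast_singleton]
    by_cases h : R a b <;> simp [h, bumpHead, incLast]
  | c :: l, a, b => by
    have hgl : (a :: c :: l).getLast (by simp) = (c :: l).getLast (by simp) :=
      List.getLast_cons (by simp)
    have hrec := sl_snoc R l c b
    rw [show (c :: l) ++ [b] = c :: (l ++ [b]) from rfl,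
      show sl R a (c :: (l ++ [b])) =
        (if R a c then bumpHead (sl R c (l ++ [b])) else 1 :: sl R c (l ++ [b])) from rfl,
      hrec, hgl,
      show sl R a (c :: l) =
        (if R a c then bumpHead (sl R c l) else 1 :: sl R c l) from rfl]
    by_cases h1 : R a c <;> by_cases h2 : R ((c :: l).getLast (by simp)) b <;>
      simp [h1, h2, bumpHead_incLast, bumpHead_append_one _ (sl_ne_nil R c l),
        one_cons_incLast _ (sl_ne_nil R c l)]

/-- Syllable lengths of a whole list. -/
def SL (R : α → α → Bool) : List α → List ℕ
  | [] => []
  | a :: l => sl R a l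

theorem SL_snoc (R : α → α → Bool) (m : List α) (h : m ≠ []) (b : α) :
    SL R (m ++ [b]) =
      if R (m.getLast h) b then incLast (SL R m) else SL R m ++ [1] := by
  cases m with
  | nil => exact absurd rfl h
  | cons a l => exact sl_snoc R l a b

theorem SL_reverse_aux (R : α → α → Bool) (hsymm : ∀ a b, R a b = R b a) :
    ∀ (l : List α) (a : α), SL R (l.reverse ++ [a]) = (sl R a l).reverse
  | [], a => rfl
  | b :: l, a => by
    have hne : l.reverse ++ [b] ≠ [] := by simp
    have hgl : (l.reverse ++ [b]).getLast hne = b := List.getLast_concat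
    rw [show (b :: l).reverse = l.reverse ++ [b] by simp,
      SL_snoc R (l.reverse ++ [b]) hne a, hgl,
      SL_reverse_aux R hsymm l b,
      show sl R a (b :: l) =
        (if R a b then bumpHead (sl R b l) else 1 :: sl R b l) from rfl,
      hsymm b a]
    by_cases h : R a b <;> simp [h, incLast_reverse]

theorem SL_reverse (R : α → α → Bool) (hsymm : ∀ a b, R a b = R b a) (l : List α) :
    SL R l.reverse = (SL R l).reverse := by
  cases l with
  | nil => rfl
  | cons a l =>
    rw [show (a :: l).reverse = l.reverse ++ [a] by simp, SL_reverse_aux R hsymm]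
    rfl

theorem sl_map (R R' : α → α → Bool) (f : α → α) (hf : ∀ a b, R' (f a) (f b) = R a b) :
    ∀ (a : α) (l : List α), sl R' (f a) (l.map f) = sl R a l
  | a, [] => rfl
  | a, b :: l => by simp [sl, hf, sl_map R R' f hf b l]

theorem SL_map (R R' : α → α → Bool) (f : α → α) (hf : ∀ a b, R' (f a) (f b) = R a b)
    (l : List α) : SL R' (l.map f) = SL R l := by
  cases l with
  | nil => rfl
  | cons a l => exact sl_map R R' f hf a l

/-- Sum of signs of consecutive differences. -/
def S : List ℕ → ℤ
  | [] => 0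
  | [_] => 0
  | a :: b :: l => Int.sign ((b : ℤ) - (a : ℤ)) + S (b :: l)

theorem foldl_eq_S :
    ∀ (ns : List ℕ) (init : ℤ),
      (ns.zip ns.tail).foldl (fun acc p => acc + Int.sign ((p.2 : ℤ) - (p.1 : ℤ))) init
        = init + S ns
  | [], i => by simp [S]
  | [n], i => by simp [S]
  | a :: b :: l, i => by
    have : ((a :: b :: l).zip (a :: b :: l).tail)
        = (a, b) :: ((b :: l).zip (b :: l).tail) := rfl
    rw [this, List.foldl_cons, foldl_eq_S (b :: l)]
    simp only [S]
    ring

theorem S_snoc : ∀ (m : List ℕ) (h : m ≠ []) (b : ℕ),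
    S (m ++ [b]) = S m + Int.sign ((b : ℤ) - (m.getLast h : ℤ))
  | [], h, b => absurd rfl h
  | [a], _, b => by simp [S]
  | a :: c :: l, _, b => by
    have hgl : (a :: c :: l).getLast (by simp) = (c :: l).getLast (by simp) :=
      List.getLast_cons (by simp)
    have hrec := S_snoc (c :: l) (by simp) b
    rw [show (c :: l) ++ [b] = c :: (l ++ [b]) from rfl] at hrec
    rw [show (a :: c :: l) ++ [b] = a :: c :: (l ++ [b]) from rfl,
      show S (a :: c :: (l ++ [b])) =
        Int.sign ((c : ℤ) - (a : ℤ)) + S (c :: (l ++ [b])) from rfl,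
      hrec, hgl,
      show S (a :: c :: l) = Int.sign ((c : ℤ) - (a : ℤ)) + S (c :: l) from rfl]
    ring

theorem S_reverse_aux : ∀ (l : List ℕ) (a : ℕ), S (l.reverse ++ [a]) = -S (a :: l)
  | [], a => rfl
  | b :: l, a => by
    have hne : l.reverse ++ [b] ≠ [] := by simp
    have hgl : (l.reverse ++ [b]).getLast hne = b := List.getLast_concat
    rw [show (b :: l).reverse = l.reverse ++ [b] by simp,
      S_snoc (l.reverse ++ [b]) hne a, hgl,
      S_reverse_aux l b,
      show S (a :: b :: l) = Int.sign ((b : ℤ) - (a : ℤ)) + S (b :: l) from rfl]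
    have : Int.sign ((a : ℤ) - (b : ℤ)) = -Int.sign ((b : ℤ) - (a : ℤ)) := by
      rw [show (a : ℤ) - b = -((b : ℤ) - a) by ring, Int.sign_neg]
    rw [this]
    ring

theorem S_reverse (l : List ℕ) : S l.reverse = -S l := by
  cases l with
  | nil => rfl
  | cons a l =>
    rw [show (a :: l).reverse = l.reverse ++ [a] by simp, S_reverse_aux]

end DeltaAux

open DeltaAux in
theorem syllableLengths_eq_SL {X : Type*} [DecidableEq X] (w : FreeGroup X) :
    syllableLengths w = SL (fun a b => a.1 == b.1) w.toWord := by
  unfold syllableLengths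
  cases h : w.toWord with
  | nil => rfl
  | cons a l => rw [splitBy_cons, map_length_sb]; rfl

open DeltaAux in
theorem syllableLengths_inv {X : Type*} [DecidableEq X] (w : FreeGroup X) :
    syllableLengths w⁻¹ = (syllableLengths w).reverse := by
  have hsymm : ∀ a b : X × Bool, (a.1 == b.1) = (b.1 == a.1) := by
    intro a b
    simp [Bool.beq_comm]
  rw [syllableLengths_eq_SL, syllableLengths_eq_SL, FreeGroup.toWord_inv,
    FreeGroup.invRev, SL_reverse _ hsymm,
    SL_map (fun a b => a.1 == b.1) (fun a b => a.1 == b.1)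
      (fun g => (g.1, !g.2)) (fun a b => rfl)]

open DeltaAux in
theorem delta_eq_S {X : Type*} [DecidableEq X] (w : FreeGroup X) :
    delta w = S (syllableLengths w) := by
  unfold delta
  rw [foldl_eq_S]
  simp

/-- `Δ w + Δ w⁻¹ = 0` for every `w`. -/
theorem delta_add_delta_inv {X : Type*} [DecidableEq X] (w : FreeGroup X) :
    delta w + delta w⁻¹ = 0 := by
  rw [delta_eq_S, delta_eq_S, syllableLengths_inv, DeltaAux.S_reverse]
  ring
end

section
/- The quasi-homomorphism Δ on a free group F with basis X (defined syllable-wise via the sign of differences of consecutive syllable exponents) vanishes on every palindrome: Δ(p) = 0 for all palindromes p with respect to X. -/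
namespace DeltaPalinAux
open List

variable {α : Type*} {r : α → α → Bool}

theorem loop_eq_append (l : List α) (a : α) (g : List α)
    (gs : List (List α)) : splitBy.loop r l a g gs = gs.reverse ++ splitBy.loop r l a g [] := by
  induction l generalizing a g gs with
  | nil => simp [splitBy.loop]
  | cons b l IH =>
    simp_rw [splitBy.loop]
    split <;> rw [IH]
    conv_rhs => rw [IH]
    simp

theorem loop_chunk : ∀ (t l : List α) (a : α) (g : List α),
    Chain' (fun x y => r x y = true) (g.reverse ++ a :: t) →
    (∀ x ∈ (a :: t).getLast?, ∀ y ∈ l.head?, r x y = false) →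
    splitBy.loop r (t ++ l) a g [] = (g.reverse ++ a :: t) :: splitBy r l
  | [], l, a, g, hc, hb => by
    cases l with
    | nil => simp [splitBy.loop]
    | cons b l' =>
      have hab : r a b = false := hb a (by simp) b rfl
      show splitBy.loop r (b :: l') a g [] = _
      rw [splitBy.loop]
      simp only [hab]
      rw [loop_eq_append]
      simp [splitBy]
  | c :: t', l, a, g, hc, hb => by
    have hac : r a c = true := by
      have h2 := (isChain_append.mp hc).2.1
      exact (isChain_cons_cons.mp h2).1
    show splitBy.loop r (c :: (t' ++ l)) a g [] = _
    rw [splitBy.loop]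
    simp only [hac]
    have IH := loop_chunk t' l c (a :: g) ?_ ?_
    · rw [IH]
      simp
    · simpa using hc
    · intro x hx y hy
      exact hb x (by simpa using hx) y hy

theorem splitBy_chunk (a : α) (t l : List α)
    (hc : Chain' (fun x y => r x y = true) (a :: t))
    (hb : ∀ x ∈ (a :: t).getLast?, ∀ y ∈ l.head?, r x y = false) :
    splitBy r ((a :: t) ++ l) = (a :: t) :: splitBy r l := by
  have := loop_chunk t l a [] (by simpa using hc) hb
  simpa [splitBy] using this

theorem splitBy_flatten (L : List (List α))
    (h1 : ∀ m ∈ L, m ≠ [])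
    (h2 : ∀ m ∈ L, Chain' (fun x y => r x y = true) m)
    (h3 : L.Chain' fun p q => ∀ x ∈ p.getLast?, ∀ y ∈ q.head?, r x y = false) :
    splitBy r L.flatten = L := by
  induction L with
  | nil => rfl
  | cons g L IH =>
    obtain ⟨a, t, rfl⟩ := exists_cons_of_ne_nil (h1 g mem_cons_self)
    rw [flatten_cons, splitBy_chunk a t L.flatten (h2 _ mem_cons_self) ?_,
      IH (fun m hm => h1 m (mem_cons_of_mem _ hm)) (fun m hm => h2 m (mem_cons_of_mem _ hm))
        h3.tail]
    intro x hx y hy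
    cases L with
    | nil => simp at hy
    | cons g' L' =>
      obtain ⟨a', t', rfl⟩ := exists_cons_of_ne_nil (h1 g' (by simp))
      rw [flatten_cons] at hy
      rw [head?_append] at hy
      simp only [head?_cons, Option.orElse_some, Option.some_or] at hy
      have := (isChain_cons_cons.mp h3).1
      exact this x hx y (by simpa using hy)

theorem splitBy_reverse (hsymm : ∀ x y, r x y = r y x) (l : List α) :
    splitBy r l.reverse = ((splitBy r l).map reverse).reverse := by
  have key := splitBy_flatten (r := r) (((splitBy r l).map reverse).reverse) ?_ ?_ ?_
  · rw [← key]
    congr 1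
    rw [← reverse_flatten, flatten_splitBy]
  · intro m hm
    simp only [mem_reverse, mem_map] at hm
    obtain ⟨m', hm', rfl⟩ := hm
    simpa using ne_nil_of_mem_splitBy hm'
  · intro m hm
    simp only [mem_reverse, mem_map] at hm
    obtain ⟨m', hm', rfl⟩ := hm
    show List.IsChain _ _
    rw [isChain_reverse]
    have := isChain_of_mem_splitBy hm'
    exact this.imp (fun x y h => by show r y x = true; rw [hsymm]; exact h)
  · show List.IsChain _ _
    rw [isChain_reverse, isChain_map]
    have := isChain_getLast_head_splitBy r l
    refine this.imp ?_
    rintro p q ⟨hp, hq, h⟩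
    intro x hx y hy
    rw [getLast?_reverse] at hx
    rw [head?_reverse] at hy
    rw [getLast?_eq_getLast hp] at hy
    rw [head?_eq_head hq] at hx
    simp only [Option.mem_some_iff] at hx hy
    subst hx; subst hy
    rw [hsymm]
    exact h

end DeltaPalinAux

namespace DeltaPalinAux
open List

def sgn (p : ℕ × ℕ) : ℤ := Int.sign ((p.2 : ℤ) - (p.1 : ℤ))

def S (L : List ℕ) : ℤ := ((L.zip L.tail).map sgn).sum

theorem foldl_eq_S (L : List ℕ) :
    (L.zip L.tail).foldl (fun acc p => acc + Int.sign ((p.2 : ℤ) - (p.1 : ℤ))) 0 = S L := by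
  have key : ∀ (M : List (ℕ × ℕ)) (c : ℤ),
      M.foldl (fun acc p => acc + Int.sign ((p.2 : ℤ) - (p.1 : ℤ))) c = c + (M.map sgn).sum := by
    intro M
    induction M with
    | nil => simp
    | cons p M IH => intro c; simp only [foldl_cons, map_cons, sum_cons, IH, sgn]; ring
  simpa [S] using key _ 0

theorem S_cons_cons (a b : ℕ) (L : List ℕ) : S (a :: b :: L) = sgn (a, b) + S (b :: L) := by
  simp [S]

theorem sgn_swap (a b : ℕ) : sgn (b, a) = - sgn (a, b) := by
  simp only [sgn]
  rw [show ((a : ℤ) - b) = -((b : ℤ) - a) by ring, Int.sign_neg]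

theorem S_append_singleton : ∀ (M : List ℕ) (x : ℕ),
    S (M ++ [x]) = S M + (match M.getLast? with | none => 0 | some a => sgn (a, x))
  | [], x => by simp [S]
  | [a], x => by simp [S]
  | a :: b :: M, x => by
    rw [cons_append, cons_append, S_cons_cons, ← cons_append,
      S_append_singleton (b :: M) x, S_cons_cons, getLast?_cons_cons]
    ring

theorem S_reverse : ∀ (L : List ℕ), S L.reverse = - S L
  | [] => by simp [S]
  | [a] => by simp [S]
  | a :: b :: L => by
    rw [reverse_cons, S_append_singleton, S_reverse (b :: L), S_cons_cons]
    have h : (b :: L).reverse.getLast? = some b := by rw [getLast?_reverse, head?_cons]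
    rw [h]
    show -S (b :: L) + sgn (b, a) = -(sgn (a, b) + S (b :: L))
    rw [sgn_swap]
    ring

end DeltaPalinAux


/-- `w` is a palindrome w.r.t. the basis `X`: its reduced word equals its reverse. -/
def IsPalindrome {X : Type*} [DecidableEq X] (w : FreeGroup X) : Prop :=
  w.toWord.reverse = w.toWord

/-- `Δ` vanishes on palindromes. -/
theorem delta_palindrome {X : Type*} [DecidableEq X] (p : FreeGroup X)
    (hp : IsPalindrome p) : delta p = 0 := by
  have hsymm : ∀ x y : X × Bool, (x.1 == y.1) = (y.1 == x.1) := by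
    intro x y
    by_cases h : x.1 = y.1 <;> simp [h, Ne.symm]
  have hL : (syllableLengths p).reverse = syllableLengths p := by
    unfold syllableLengths
    conv_rhs => rw [← hp]
    rw [DeltaPalinAux.splitBy_reverse hsymm]
    simp [Function.comp]
  have hd : delta p = DeltaPalinAux.S (syllableLengths p) := DeltaPalinAux.foldl_eq_S _
  have hrev := DeltaPalinAux.S_reverse (syllableLengths p)
  rw [hL] at hrev
  omega
end

section
/- The quasi-homomorphism Δ on a free group F with basis X satisfies Δ(uw) ≤ Δ(u) + Δ(w) + 6 for all u, w ∈ F. -/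
namespace QH
open List

variable {α : Type*} {r : α → α → Bool}

/-- Relation between adjacent groups: the junction is not related. -/
def Br (r : α → α → Bool) (g g' : List α) : Prop :=
  ∀ x y, g.getLast? = some x → g'.head? = some y → r x y = false

private theorem loop_eq_append (r : α → α → Bool) (l : List α) (a : α) (g : List α)
    (gs : List (List α)) :
    splitBy.loop r l a g gs = gs.reverse ++ splitBy.loop r l a g [] := by
  induction l generalizing a g gs with
  | nil => simp [splitBy.loop]
  | cons b l IH =>
    simp only [splitBy.loop]
    cases r a b
    · rw [IH b [] ((a::g).reverse :: gs), IH b [] [(a::g).reverse]]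
      simp
    · exact IH b (a :: g) gs

private theorem loop_chain_append (t rest : List α) (a : α) (g : List α) (gs : List (List α))
    (hc : IsChain (fun x y => r x y = true) (a :: t))
    (hj : ∀ x y, (a :: t).getLast? = some x → rest.head? = some y → r x y = false) :
    splitBy.loop r (t ++ rest) a g gs
      = gs.reverse ++ (g.reverse ++ a :: t) :: splitBy r rest := by
  induction t generalizing a g gs with
  | nil =>
    cases rest with
    | nil => simp [splitBy.loop]
    | cons y rest' =>
      have hr : r a y = false := hj a y rfl rfl
      simp only [nil_append, splitBy.loop, hr]
      rw [loop_eq_append]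
      simp [splitBy]
  | cons c t' IH =>
    have hac : r a c = true := hc.rel_head
    simp only [cons_append, splitBy.loop, hac]
    show splitBy.loop r (t' ++ rest) c (a :: g) gs = _
    rw [IH c (a :: g) gs hc.tail]
    · simp
    · intro x y hx hy
      exact hj x y (by rwa [getLast?_cons_cons] ) hy

theorem splitBy_append_chain {g : List α} (rest : List α) (hg : g ≠ [])
    (hc : IsChain (fun x y => r x y = true) g)
    (hj : ∀ x y, g.getLast? = some x → rest.head? = some y → r x y = false) :
    splitBy r (g ++ rest) = g :: splitBy r rest := by
  cases g with
  | nil => exact absurd rfl hg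
  | cons a t =>
    show splitBy.loop r (t ++ rest) a [] [] = _
    rw [loop_chain_append t rest a [] [] hc hj]
    simp

private theorem head?_flatten_of {gs : List (List α)} {g : List α}
    (h : gs.head? = some g) (hg : g ≠ []) : gs.flatten.head? = g.head? := by
  cases gs with
  | nil => simp at h
  | cons g' t =>
    rcases g with _ | ⟨a, u⟩
    · exact absurd rfl hg
    · obtain rfl : g' = a :: u := by simpa using h
      simp

private theorem getLast?_flatten_of {gs : List (List α)} {g : List α}
    (h1 : ∀ g ∈ gs, g ≠ [])
    (h : gs.getLast? = some g) (hg : g ≠ []) : gs.flatten.getLast? = g.getLast? := by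
  induction gs with
  | nil => simp at h
  | cons g' t IH =>
    cases t with
    | nil =>
      obtain rfl : g' = g := by simpa using h
      simp
    | cons g'' t' =>
      rw [getLast?_cons_cons] at h
      rw [flatten_cons, getLast?_append_of_ne_nil,
        IH (fun x hx => h1 x (by simp [hx])) h]
      have hg'' : g'' ≠ [] := h1 g'' (by simp)
      rcases g'' with _ | ⟨a, u⟩
      · exact absurd rfl hg''
      · simp

theorem splitBy_flatten_eq (gs : List (List α)) (h1 : ∀ g ∈ gs, g ≠ [])
    (h2 : ∀ g ∈ gs, IsChain (fun x y => r x y = true) g)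
    (h3 : gs.IsChain (Br r)) : splitBy r gs.flatten = gs := by
  induction gs with
  | nil => simp
  | cons g t IH =>
    rw [flatten_cons, splitBy_append_chain _ (h1 g (by simp)) (h2 g (by simp))]
    · rw [IH (fun g hg => h1 g (by simp [hg])) (fun g hg => h2 g (by simp [hg])) h3.tail]
    · intro x y hx hy
      cases t with
      | nil => simp at hy
      | cons g' t' =>
        have hg' : g' ≠ [] := h1 g' (by simp)
        rw [head?_flatten_of (gs := g' :: t') (by simp) hg'] at hy
        exact (isChain_cons_cons.1 h3).1 x y hx hy

-- continuation inside namespace QH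
variable {α : Type*} {r : α → α → Bool}
open List

theorem splitBy_ne_nil_of_ne_nil (r : α → α → Bool) {A : List α} (hA : A ≠ []) :
    splitBy r A ≠ [] := by
  intro h
  have := flatten_splitBy r A
  rw [h] at this
  exact hA this.symm

theorem chain'_Br_splitBy (r : α → α → Bool) (l : List α) :
    (l.splitBy r).IsChain (Br r) := by
  refine (isChain_getLast_head_splitBy r l).imp ?_
  rintro a b ⟨ha, hb, hr⟩
  intro x y hx hy
  rw [getLast?_eq_getLast ha] at hx
  rw [head?_eq_head hb] at hy
  obtain rfl := Option.some.inj hx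
  obtain rfl := Option.some.inj hy
  exact hr

theorem splitBy_append_of_not {A B : List α} (hA : A ≠ []) (hB : B ≠ [])
    (h : ∀ x y, A.getLast? = some x → B.head? = some y → r x y = false) :
    splitBy r (A ++ B) = splitBy r A ++ splitBy r B := by
  have hfa : (splitBy r A).flatten = A := flatten_splitBy r A
  have hfb : (splitBy r B).flatten = B := flatten_splitBy r B
  have h1A : ∀ g ∈ splitBy r A, g ≠ [] := fun g hg => ne_nil_of_mem_splitBy hg
  have h1B : ∀ g ∈ splitBy r B, g ≠ [] := fun g hg => ne_nil_of_mem_splitBy hg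
  have key := splitBy_flatten_eq (r := r) (splitBy r A ++ splitBy r B) ?_ ?_ ?_
  · rwa [flatten_append, hfa, hfb] at key
  · intro g hg
    rcases mem_append.1 hg with hg | hg
    · exact h1A g hg
    · exact h1B g hg
  · intro g hg
    rcases mem_append.1 hg with hg | hg
    · exact isChain_of_mem_splitBy hg
    · exact isChain_of_mem_splitBy hg
  · refine isChain_append.2 ⟨chain'_Br_splitBy r A, chain'_Br_splitBy r B, ?_⟩
    intro gA hgA gB hgB x y hx hy
    have hgAne : gA ≠ [] := h1A gA (mem_of_mem_getLast? hgA)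
    have hgBne : gB ≠ [] := h1B gB (mem_of_mem_head? hgB)
    apply h x y
    · rw [← hfa, getLast?_flatten_of h1A hgA hgAne, hx]
    · rw [← hfb, head?_flatten_of hgB hgBne, hy]

theorem splitBy_append_of_rel {A B : List α} (hA : A ≠ []) (hB : B ≠ [])
    (h : ∀ x y, A.getLast? = some x → B.head? = some y → r x y = true) :
    ∃ GA g₁ g₂ GB, splitBy r A = GA ++ [g₁] ∧ splitBy r B = g₂ :: GB ∧
      splitBy r (A ++ B) = GA ++ (g₁ ++ g₂) :: GB := by
  have hfa : (splitBy r A).flatten = A := flatten_splitBy r A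
  have hfb : (splitBy r B).flatten = B := flatten_splitBy r B
  have h1A : ∀ g ∈ splitBy r A, g ≠ [] := fun g hg => ne_nil_of_mem_splitBy hg
  have h1B : ∀ g ∈ splitBy r B, g ≠ [] := fun g hg => ne_nil_of_mem_splitBy hg
  rcases (splitBy r A).eq_nil_or_concat with hSA | ⟨GA, g₁, hSA⟩
  · exact absurd hSA (splitBy_ne_nil_of_ne_nil r hA)
  rw [concat_eq_append] at hSA
  rcases hSB : splitBy r B with _ | ⟨g₂, GB⟩
  · exact absurd hSB (splitBy_ne_nil_of_ne_nil r hB)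
  have hg₁ : g₁ ≠ [] := h1A g₁ (by simp [hSA])
  have hg₂ : g₂ ≠ [] := h1B g₂ (by simp [hSB])
  have hg₁last : g₁.getLast? = A.getLast? := by
    rw [← hfa, getLast?_flatten_of h1A (by simp [hSA]) hg₁]
  have hg₂head : g₂.head? = B.head? := by
    rw [← hfb, head?_flatten_of (by simp [hSB]) hg₂]
  refine ⟨GA, g₁, g₂, GB, hSA, rfl, ?_⟩
  have key := splitBy_flatten_eq (r := r) (GA ++ (g₁ ++ g₂) :: GB) ?_ ?_ ?_
  · rw [← key]
    congr 1
    rw [← hfa, ← hfb, hSA, hSB]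
    simp
  · intro g hg
    simp only [mem_append, mem_cons] at hg
    rcases hg with hg | rfl | hg
    · exact h1A g (by simp [hSA, hg])
    · simp [hg₁]
    · exact h1B g (by simp [hSB, hg])
  · intro g hg
    simp only [mem_append, mem_cons] at hg
    rcases hg with hg | rfl | hg
    · exact isChain_of_mem_splitBy (l := A) (by rw [hSA]; exact mem_append_left _ hg)
    · refine IsChain.append (isChain_of_mem_splitBy (l := A) (by simp [hSA]))
        (isChain_of_mem_splitBy (l := B) (by simp [hSB])) ?_
      intro x hx y hy
      apply h x y
      · rw [← hg₁last]; exact hx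
      · rw [← hg₂head]; exact hy
    · exact isChain_of_mem_splitBy (l := B) (by rw [hSB]; exact mem_cons_of_mem _ hg)
  · have hcA := chain'_Br_splitBy r A
    have hcB := chain'_Br_splitBy r B
    rw [hSA] at hcA
    rw [hSB] at hcB
    
    obtain ⟨hB1, hB2⟩ := isChain_cons.1 hcB
    refine isChain_append.2 ⟨(isChain_append.1 hcA).1, ?_, ?_⟩
    · refine isChain_cons.2 ⟨?_, hB2⟩
      intro g' hg' x y hx hy
      rw [getLast?_append_of_ne_nil _ hg₂] at hx
      exact hB1 g' hg' x y hx hy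
    · intro gA hgA g' hg' x y hx hy
      have hBr : Br r gA g₁ := by
        have := (isChain_append.1 hcA).2.2 gA hgA g₁ (by simp)
        exact this
      simp only [head?_cons, Option.mem_def, Option.some.injEq] at hg'
      subst hg'
      rcases g₁ with _ | ⟨a, u⟩
      · exact absurd rfl hg₁
      · exact hBr x y hx (by simpa using hy)

theorem splitBy_map {β : Type*} (f : β → α) (r' : β → β → Bool)
    (hf : ∀ a b, r (f a) (f b) = r' a b) (l : List β) :
    splitBy r (l.map f) = (splitBy r' l).map (map f) := by
  have key := splitBy_flatten_eq (r := r) ((splitBy r' l).map (map f)) ?_ ?_ ?_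
  · rwa [← map_flatten, flatten_splitBy] at key
  · intro g hg
    rcases mem_map.1 hg with ⟨g', hg', rfl⟩
    have := ne_nil_of_mem_splitBy hg'
    simpa using this
  · intro g hg
    rcases mem_map.1 hg with ⟨g', hg', rfl⟩
    rw [isChain_map]
    refine (isChain_of_mem_splitBy hg').imp ?_
    intro a b h
    rw [hf]; exact h
  · rw [isChain_map]
    refine (chain'_Br_splitBy r' l).imp ?_
    intro g g' h x y hx hy
    rw [getLast?_map] at hx
    rw [head?_map] at hy
    rcases hgl : g.getLast? with _ | x₀
    · rw [hgl] at hx; simp at hx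
    rcases hgh : g'.head? with _ | y₀
    · rw [hgh] at hy; simp at hy
    rw [hgl] at hx; rw [hgh] at hy
    obtain rfl : f x₀ = x := by simpa using hx
    obtain rfl : f y₀ = y := by simpa using hy
    rw [hf]
    exact h x₀ y₀ hgl hgh

theorem splitBy_reverse (hsymm : ∀ a b, r a b = r b a) (l : List α) :
    splitBy r l.reverse = ((splitBy r l).map reverse).reverse := by
  have key := splitBy_flatten_eq (r := r) (((splitBy r l).map reverse).reverse) ?_ ?_ ?_
  · rwa [← reverse_flatten, flatten_splitBy] at key
  · intro g hg
    rcases mem_map.1 (mem_reverse.1 hg) with ⟨g', hg', rfl⟩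
    have := ne_nil_of_mem_splitBy hg'
    simpa using this
  · intro g hg
    rcases mem_map.1 (mem_reverse.1 hg) with ⟨g', hg', rfl⟩
    rw [isChain_reverse]
    refine (isChain_of_mem_splitBy hg').imp ?_
    intro a b h
    show r b a = true
    rw [hsymm]; exact h
  · rw [← map_reverse, isChain_map, isChain_reverse]
    refine (chain'_Br_splitBy r l).imp ?_
    intro g g' h x y hx hy
    show r x y = false
    rw [getLast?_reverse] at hx
    rw [head?_reverse] at hy
    rw [hsymm]
    exact h y x hy hx

/-! ### The sign-sum `D` -/

def D : List ℕ → ℤ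
  | a :: b :: t => Int.sign ((b : ℤ) - (a : ℤ)) + D (b :: t)
  | _ => 0

@[simp] theorem D_nil : D [] = 0 := rfl
@[simp] theorem D_single (a : ℕ) : D [a] = 0 := rfl
theorem D_cons_cons (a b : ℕ) (t : List ℕ) :
    D (a :: b :: t) = Int.sign ((b : ℤ) - (a : ℤ)) + D (b :: t) := rfl

/-- The junction term. -/
def JJ (A B : List ℕ) : ℤ :=
  match A.getLast?, B.head? with
  | some a, some b => Int.sign ((b : ℤ) - (a : ℤ))
  | _, _ => 0

theorem sign_bd (x : ℤ) : -1 ≤ x.sign ∧ x.sign ≤ 1 := by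
  rcases lt_trichotomy x 0 with h | h | h
  · simp [Int.sign_eq_neg_one_of_neg h]
  · simp [h]
  · simp [Int.sign_eq_one_of_pos h]

theorem sign_mono {x y : ℤ} (h : x ≤ y) : x.sign ≤ y.sign := by
  rcases lt_trichotomy x 0 with hx | hx | hx <;>
    rcases lt_trichotomy y 0 with hy | hy | hy <;>
      simp_all [Int.sign_eq_neg_one_of_neg, Int.sign_eq_one_of_pos] <;> omega

theorem JJ_bd (A B : List ℕ) : -1 ≤ JJ A B ∧ JJ A B ≤ 1 := by
  unfold JJ
  rcases A.getLast? with _ | a <;> rcases B.head? with _ | b <;> simp <;>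
    exact sign_bd _

theorem JJ_nil_left (B : List ℕ) : JJ [] B = 0 := by unfold JJ; simp
theorem JJ_nil_right (A : List ℕ) : JJ A [] = 0 := by unfold JJ; rcases A.getLast? with _|a <;> simp

theorem D_append : ∀ A B : List ℕ, D (A ++ B) = D A + D B + JJ A B
  | [], B => by simp [JJ_nil_left]
  | [a], B => by
    cases B with
    | nil => simp [JJ_nil_right]
    | cons b t =>
      simp only [singleton_append, D_cons_cons, D_single, JJ, getLast?_singleton, head?_cons]
      ring
  | a :: c :: A', B => by
    rw [cons_append, cons_append, D_cons_cons, ← cons_append, D_append (c :: A') B,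
      D_cons_cons]
    have : JJ (a :: c :: A') B = JJ (c :: A') B := by unfold JJ; rw [getLast?_cons_cons]
    rw [this]; ring

theorem D_reverse : ∀ l : List ℕ, D l.reverse = - D l
  | [] => by simp
  | a :: t => by
    rw [reverse_cons, D_append, D_reverse t]
    cases t with
    | nil => simp [JJ_nil_left]
    | cons b t' =>
      rw [D_cons_cons]
      have : JJ (b :: t').reverse [a] = Int.sign ((a : ℤ) - (b : ℤ)) := by
        unfold JJ
        rw [getLast?_reverse]
        simp
      rw [this]
      have h2 : ((a : ℤ) - b) = -((b : ℤ) - a) := by ring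
      rw [h2, Int.sign_neg]
      simp only [D_single]
      ring


theorem D_merge_bd (A B : List ℕ) (a b : ℕ) :
    -2 ≤ D (A ++ (a + b) :: B) - D (A ++ [a]) - D (b :: B) ∧
      D (A ++ (a + b) :: B) - D (A ++ [a]) - D (b :: B) ≤ 2 := by
  have e1 : D (A ++ (a + b) :: B) = D A + D B + JJ [(a+b)] B + JJ A ((a+b) :: B) := by
    rw [show (a+b) :: B = [(a+b)] ++ B from rfl, ← append_assoc]
    rw [D_append (A ++ [a+b]) B, D_append A [a+b]]
    have h4 : JJ (A ++ [a + b]) B = JJ [(a+b)] B := by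
      unfold JJ; rw [getLast?_concat]; simp
    have h5 : JJ A [a + b] = JJ A ((a+b) :: B) := by
      unfold JJ; simp
    rw [h4, h5]
    simp only [D_single, singleton_append]
    ring
  have e2 : D (A ++ [a]) = D A + JJ A [a] := by rw [D_append]; simp
  have e3 : D (b :: B) = D B + JJ [b] B := by
    rw [show b :: B = [b] ++ B from rfl, D_append]; simp
  rw [e1, e2, e3]
  have hfst : 0 ≤ JJ A ((a+b) :: B) - JJ A [a] ∧ JJ A ((a+b) :: B) - JJ A [a] ≤ 2 := by
    unfold JJ
    cases hAx : A.getLast? with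
    | none => simp
    | some x =>
      simp only [head?_cons]
      have hm : Int.sign ((a : ℤ) - x) ≤ Int.sign (((a + b : ℕ) : ℤ) - x) :=
        sign_mono (by push_cast; omega)
      have b1 := sign_bd ((a : ℤ) - x)
      have b2 := sign_bd ((((a + b : ℕ)) : ℤ) - (x : ℤ))
      constructor <;> linarith
  have hsnd : -2 ≤ JJ [(a+b)] B - JJ [b] B ∧ JJ [(a+b)] B - JJ [b] B ≤ 0 := by
    unfold JJ
    cases hBy : B.head? with
    | none => simp
    | some y =>
      simp only [getLast?_singleton]
      have hm : Int.sign ((y : ℤ) - ((a + b : ℕ) : ℤ)) ≤ Int.sign ((y : ℤ) - b) :=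
        sign_mono (by push_cast; omega)
      have b1 := sign_bd ((y : ℤ) - (b : ℤ))
      have b2 := sign_bd ((y : ℤ) - (((a + b : ℕ)) : ℤ))
      constructor <;> linarith
  constructor <;> linarith

/-- Syllable lengths of a raw word. -/
def SL (r : α → α → Bool) (L : List α) : List ℕ := (splitBy r L).map length

theorem D_SL_append (r : α → α → Bool) (A B : List α) :
    -2 ≤ D (SL r (A ++ B)) - D (SL r A) - D (SL r B) ∧
      D (SL r (A ++ B)) - D (SL r A) - D (SL r B) ≤ 2 := by
  rcases eq_or_ne A [] with rfl | hA
  · constructor <;> simp [SL]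
  rcases eq_or_ne B [] with rfl | hB
  · constructor <;> simp [SL]
  obtain ⟨x, hx⟩ : ∃ x, A.getLast? = some x := by
    cases hA' : A.getLast? with
    | none => exact absurd (getLast?_eq_none_iff.1 hA') hA
    | some x => exact ⟨x, rfl⟩
  obtain ⟨y, hy⟩ : ∃ y, B.head? = some y := by
    cases hB' : B.head? with
    | none => exact absurd (head?_eq_none_iff.1 hB') hB
    | some y => exact ⟨y, rfl⟩
  have hinj : ∀ x' y', A.getLast? = some x' → B.head? = some y' → x' = x ∧ y' = y := by
    intro x' y' hx' hy'
    rw [hx] at hx'; rw [hy] at hy'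
    exact ⟨(Option.some.inj hx').symm, (Option.some.inj hy').symm⟩
  cases hr : r x y with
  | false =>
    have hsp : splitBy r (A ++ B) = splitBy r A ++ splitBy r B := by
      apply splitBy_append_of_not hA hB
      intro x' y' hx' hy'
      obtain ⟨rfl, rfl⟩ := hinj x' y' hx' hy'
      exact hr
    have e : D (SL r (A ++ B)) = D (SL r A) + D (SL r B) + JJ (SL r A) (SL r B) := by
      unfold SL; rw [hsp, map_append, D_append]
    rw [e]
    have := JJ_bd (SL r A) (SL r B)
    constructor <;> linarith
  | true =>
    obtain ⟨GA, g₁, g₂, GB, hSA, hSB, hAB⟩ :=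
      splitBy_append_of_rel (r := r) hA hB (fun x' y' hx' hy' => by
        obtain ⟨rfl, rfl⟩ := hinj x' y' hx' hy'
        exact hr)
    have eA : SL r A = GA.map length ++ [g₁.length] := by simp [SL, hSA]
    have eB : SL r B = g₂.length :: GB.map length := by simp [SL, hSB]
    have eAB : SL r (A ++ B) = GA.map length ++ (g₁.length + g₂.length) :: GB.map length := by
      simp [SL, hAB]
    rw [eA, eB, eAB]
    exact D_merge_bd (GA.map length) (GB.map length) g₁.length g₂.length

theorem foldl_eq_D : ∀ (l : List ℕ) (c : ℤ),
    (l.zip l.tail).foldl (fun acc p => acc + Int.sign ((p.2 : ℤ) - (p.1 : ℤ))) c = c + D l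
  | [], c => by simp
  | [a], c => by simp
  | a :: b :: t, c => by
    rw [show ((a :: b :: t).zip (a :: b :: t).tail)
        = (a, b) :: ((b :: t).zip (b :: t).tail) from rfl, foldl_cons,
      foldl_eq_D (b :: t) _, D_cons_cons]
    ring

/-! ### Words in a free group -/

section FG
open FreeGroup

variable {X : Type*} [DecidableEq X]

/-- Letters with the same base. -/
def rel : (X × Bool) → (X × Bool) → Bool := fun a b => a.1 == b.1

theorem rel_symm : ∀ a b : X × Bool, rel a b = rel b a := by
  intro a b
  simp only [rel]
  rcases eq_or_ne a.1 b.1 with h | h <;> simp [h, Ne.symm]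

def noInv (a b : X × Bool) : Prop := ¬(b.1 = a.1 ∧ b.2 = !a.2)

theorem chain'_of_reduced : ∀ {L : List (X × Bool)}, reduce L = L → IsChain noInv L := by
  intro L
  induction L with
  | nil => simp
  | cons a t IH =>
    intro h
    rw [reduce.cons] at h
    have hlen : (reduce t).length ≤ t.length := Red.length_le reduce.red
    cases hr : reduce t with
    | nil =>
      rw [hr] at h
      obtain rfl : t = [] := by
        have := congrArg List.length h
        simp at this
        simp [this]
      simp
    | cons hd tl =>
      rw [hr] at h hlen
      dsimp only at h
      by_cases hc : a.1 = hd.1 ∧ a.2 = !hd.2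
      · rw [if_pos hc] at h
        have := congrArg List.length h
        simp at this hlen
        omega
      · rw [if_neg hc] at h
        have ht : t = hd :: tl := by
          injection h with _ h'
          exact h'.symm
        rw [ht]
        refine isChain_cons_cons.2 ⟨?_, ?_⟩
        · intro hcon
          apply hc
          obtain ⟨h1, h2⟩ := hcon
          refine ⟨h1.symm, ?_⟩
          rw [h2]
          simp
        · rw [← ht]
          exact IH (hr.trans ht.symm)

theorem reduced_of_chain' : ∀ {L : List (X × Bool)}, IsChain noInv L → reduce L = L := by
  intro L
  induction L with
  | nil => simp
  | cons a t IH =>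
    intro h
    rw [reduce.cons, IH h.tail]
    cases t with
    | nil => rfl
    | cons b t' =>
      have hni : noInv a b := (isChain_cons_cons.1 h).1
      dsimp only
      rw [if_neg ?_]
      intro hcon
      apply hni
      obtain ⟨h1, h2⟩ := hcon
      exact ⟨h1.symm, by rw [h2]; simp⟩

theorem invRev_cons (y : X × Bool) (s : List (X × Bool)) :
    invRev (y :: s) = invRev s ++ [(y.1, !y.2)] := by
  simp [invRev]

theorem decomp : ∀ (L₂ L₁ : List (X × Bool)), reduce L₁ = L₁ → reduce L₂ = L₂ →
    ∃ p s q, L₁ = p ++ invRev s ∧ L₂ = s ++ q ∧ reduce (L₁ ++ L₂) = p ++ q := by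
  intro L₂
  induction L₂ with
  | nil =>
    intro L₁ h1 _
    exact ⟨L₁, [], [], by simp [invRev], rfl, by simpa using h1⟩
  | cons y t IH =>
    intro L₁ h1 h2
    rcases L₁.eq_nil_or_concat with rfl | ⟨L₁', x, hL⟩
    · exact ⟨[], [], y :: t, by simp [invRev], rfl, by simpa using h2⟩
    rw [concat_eq_append] at hL
    subst hL
    by_cases hxy : x = (y.1, !y.2)
    · have h1' : reduce L₁' = L₁' :=
        reduced_of_chain' ((chain'_of_reduced h1).prefix ⟨[x], rfl⟩)
      have h2' : reduce t = t := reduced_of_chain' (chain'_of_reduced h2).tail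
      obtain ⟨p, s, q, e1, e2, e3⟩ := IH L₁' h1' h2'
      refine ⟨p, y :: s, q, ?_, by rw [e2]; rfl, ?_⟩
      · rw [invRev_cons, ← append_assoc, ← e1, hxy]
      · have step : Red.Step ((L₁' ++ [x]) ++ y :: t) (L₁' ++ t) := by
          subst hxy
          have he : (L₁' ++ [((y.1 : X), !y.2)]) ++ y :: t
              = L₁' ++ (y.1, !y.2) :: (y.1, !(!y.2)) :: t := by simp
          rw [he]
          exact Red.Step.not
        rw [reduce.Step.eq step]
        exact e3
    · refine ⟨L₁' ++ [x], [], y :: t, by simp [invRev], rfl, ?_⟩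
      apply reduced_of_chain'
      refine IsChain.append (chain'_of_reduced h1) (chain'_of_reduced h2) ?_
      intro a ha b hb
      simp only [getLast?_concat, Option.mem_def, Option.some.injEq] at ha
      simp only [head?_cons, Option.mem_def, Option.some.injEq] at hb
      subst ha; subst hb
      intro hcon
      apply hxy
      obtain ⟨hc1, hc2⟩ := hcon
      ext
      · exact hc1.symm
      · show x.2 = !y.2
        rw [hc2]
        simp

theorem SL_invRev (s : List (X × Bool)) : SL rel (invRev s) = (SL rel s).reverse := by
  show SL rel ((s.map fun g : X × Bool => (g.1, !g.2)).reverse) = _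
  unfold SL
  rw [splitBy_reverse rel_symm, splitBy_map (fun g : X × Bool => (g.1, !g.2)) rel
    (fun a b => rfl)]
  simp [map_map, Function.comp_def]

end FG

end QH


theorem delta_eq {X : Type*} [DecidableEq X] (x : FreeGroup X) :
    delta x = QH.D (QH.SL QH.rel x.toWord) := by
  unfold delta syllableLengths
  rw [show (x.toWord.splitBy fun a b => a.1 == b.1).map List.length
      = QH.SL QH.rel x.toWord from rfl, QH.foldl_eq_D]
  simp

/-- `Δ` is a quasi-homomorphism. -/
theorem delta_quasi_hom {X : Type*} [DecidableEq X] (u w : FreeGroup X) :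
    delta (u * w) ≤ delta u + delta w + 6 := by
  obtain ⟨p, s, q, e1, e2, e3⟩ :=
    QH.decomp w.toWord u.toWord (FreeGroup.reduce_toWord u) (FreeGroup.reduce_toWord w)
  have emul : (u * w).toWord = p ++ q := by
    rw [← FreeGroup.mk_toWord (x := u), ← FreeGroup.mk_toWord (x := w), FreeGroup.mul_mk,
      FreeGroup.toWord_mk]
    exact e3
  rw [delta_eq (u * w), delta_eq u, delta_eq w, emul, e1, e2]
  have b3 := QH.D_SL_append QH.rel p q
  have b1 := QH.D_SL_append QH.rel p (FreeGroup.invRev s)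
  have b2 := QH.D_SL_append QH.rel s q
  have hrev : QH.D (QH.SL QH.rel (FreeGroup.invRev s)) = - QH.D (QH.SL QH.rel s) := by
    rw [QH.SL_invRev, QH.D_reverse]
  rw [hrev] at b1
  linarith [b3.2, b1.1, b2.1]
end

section
/- For distinct basis elements x_1, x_2 of a free group F and every n ≥ 1, the word w_n = x_1 x_2 x_1² x_2² ⋯ x_1ⁿ x_2ⁿ satisfies Δ(w_n) = n − 1, where Δ is the syllable-sign quasi-homomorphism. -/
namespace DeltaWnAux

open List

variable {α β : Type*}

theorem splitByLoop_eq_append (r : α → α → Bool) (l : List α) (a : α) (g : List α)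
    (gs : List (List α)) : splitBy.loop r l a g gs = gs.reverse ++ splitBy.loop r l a g [] := by
  induction l generalizing a g gs with
  | nil => simp [splitBy.loop]
  | cons b l IH =>
    simp_rw [splitBy.loop]
    split <;> rw [IH]
    conv_rhs => rw [IH]
    simp

theorem splitByLoop_replicate (r : α → α → Bool) (a : α) (hr : r a a = true) :
    ∀ (k : ℕ) (g l : List α), (∀ b ∈ l.head?, r a b = false) →
    splitBy.loop r (replicate k a ++ l) a g [] =
      (g.reverse ++ a :: replicate k a) :: l.splitBy r := by
  intro k
  induction k with
  | zero =>
    intro g l hl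
    cases l with
    | nil => simp [splitBy.loop, splitBy]
    | cons b t =>
      have hb : r a b = false := hl b rfl
      simp only [replicate, nil_append, splitBy.loop, hb]
      rw [splitByLoop_eq_append]
      simp [splitBy]
  | succ k IH =>
    intro g l hl
    rw [replicate_succ, cons_append, splitBy.loop]
    simp only [hr]
    rw [IH (a :: g) l hl]
    simp [replicate_succ]

theorem splitBy_replicate_append (r : α → α → Bool) (a : α) (hr : r a a = true)
    (k : ℕ) (l : List α) (hl : ∀ b ∈ l.head?, r a b = false) :
    splitBy r (replicate (k + 1) a ++ l) = replicate (k + 1) a :: splitBy r l := by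
  rw [replicate_succ, cons_append]
  show splitBy.loop r (replicate k a ++ l) a [] [] = _
  rw [splitByLoop_replicate r a hr k [] l hl]
  simp [replicate_succ]

theorem splitBy_blocks (r : α → α → Bool) (x y : α) (hxx : r x x = true) (hyy : r y y = true)
    (hxy : r x y = false) (hyx : r y x = false) :
    ∀ ks : List ℕ,
      splitBy r (ks.flatMap fun k => replicate (k + 1) x ++ replicate (k + 1) y)
        = ks.flatMap fun k => [replicate (k + 1) x, replicate (k + 1) y] := by
  intro ks
  induction ks with
  | nil => simp
  | cons k ks IH =>
    rw [flatMap_cons, append_assoc]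
    rw [splitBy_replicate_append r x hxx k _ (by
      intro b hb
      rw [replicate_succ, cons_append, head?_cons, Option.mem_some_iff] at hb
      rw [← hb]; exact hxy)]
    rw [splitBy_replicate_append r y hyy k _ (by
      intro b hb
      cases ks with
      | nil => simp at hb
      | cons k' ks' =>
        rw [flatMap_cons, replicate_succ, cons_append, cons_append, head?_cons,
          Option.mem_some_iff] at hb
        rw [← hb]; exact hyx)]
    rw [IH]
    simp

theorem prod_map_mk (g : β → List (α × Bool)) (l : List β) :
    (l.map (fun i => FreeGroup.mk (g i))).prod = FreeGroup.mk (l.flatMap g) := by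
  induction l with
  | nil => simp [FreeGroup.one_eq_mk]
  | cons b l IH => simp [IH, FreeGroup.mul_mk]

theorem of_pow (x : α) [DecidableEq α] (k : ℕ) :
    FreeGroup.of x ^ k = FreeGroup.mk (replicate k (x, true)) := by
  induction k with
  | zero => simp [FreeGroup.one_eq_mk]
  | succ k IH =>
    rw [pow_succ', IH, FreeGroup.of, FreeGroup.mul_mk, replicate_succ, singleton_append]

theorem reduce_eq_self [DecidableEq α] (l : List (α × Bool)) (h : ∀ p ∈ l, p.2 = true) :
    FreeGroup.reduce l = l := by
  induction l with
  | nil => rfl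
  | cons a l IH =>
    rw [FreeGroup.reduce.cons, IH (fun p hp => h p (mem_cons_of_mem _ hp))]
    cases l with
    | nil => rfl
    | cons b t =>
      have ha : a.2 = true := h a mem_cons_self
      have hb : b.2 = true := h b (mem_cons_of_mem _ mem_cons_self)
      simp [ha, hb]

theorem foldl_add_sum (g : β → ℤ) (l : List β) (c : ℤ) :
    l.foldl (fun acc p => acc + g p) c = c + (l.map g).sum := by
  induction l generalizing c with
  | nil => simp
  | cons b l IH => rw [foldl_cons, IH, map_cons, sum_cons]; ring

/-- sum of signs of consecutive differences -/
def ps (l : List ℕ) : ℤ :=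
  ((l.zip l.tail).map (fun p => Int.sign ((p.2 : ℤ) - (p.1 : ℤ)))).sum

theorem ps_cons (a b : ℕ) (t : List ℕ) :
    ps (a :: b :: t) = Int.sign ((b : ℤ) - a) + ps (b :: t) := by
  simp [ps]

theorem ps_blocks : ∀ m : ℕ, 1 ≤ m → ∀ i : ℕ,
    ps ((range' i m).flatMap fun k => [k + 1, k + 1]) = (m : ℤ) - 1 := by
  intro m hm
  induction m, hm using Nat.le_induction with
  | base => intro i; simp [ps]
  | succ m hm IH =>
    intro i
    obtain ⟨m', rfl⟩ := Nat.exists_eq_add_of_le hm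
    have hr : range' i (1 + m' + 1) = i :: range' (i + 1) (1 + m') := by
      rw [range'_succ]
    have hr2 : range' (i + 1) (1 + m') = (i + 1) :: range' (i + 2) m' := by
      rw [show 1 + m' = m' + 1 by ring, range'_succ]
    have hIH : ps ((i + 2) :: (i + 2) ::
        ((range' (i + 2) m').flatMap fun k => [k + 1, k + 1])) = ((1 + m' : ℕ) : ℤ) - 1 := by
      have := IH (i + 1)
      rw [hr2, flatMap_cons] at this
      exact this
    have hgoal : ((range' i (1 + m' + 1)).flatMap fun k => [k + 1, k + 1])
        = (i + 1) :: (i + 1) :: (i + 2) :: (i + 2) ::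
          ((range' (i + 2) m').flatMap fun k => [k + 1, k + 1]) := by
      rw [hr, hr2, flatMap_cons, flatMap_cons]
      rfl
    rw [hgoal, ps_cons, ps_cons, hIH]
    push_cast
    rw [show ((i : ℤ) + 1) - ((i : ℤ) + 1) = 0 by ring,
      show ((i : ℤ) + 2) - ((i : ℤ) + 1) = 1 by ring]
    simp

end DeltaWnAux

/-- for distinct basis letters, the word
`w_n = x₁ x₂ x₁² x₂² ⋯ x₁ⁿ x₂ⁿ` satisfies `Δ(w_n) = n - 1`. -/
theorem delta_wn {X : Type*} [DecidableEq X] (x₁ x₂ : X) (h : x₁ ≠ x₂)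
    (n : ℕ) (hn : 1 ≤ n) :
    delta (((List.range n).map
        (fun i => FreeGroup.of x₁ ^ (i + 1) * FreeGroup.of x₂ ^ (i + 1))).prod)
      = (n : ℤ) - 1 := by
  open DeltaWnAux List in
  classical
  set x : X × Bool := (x₁, true)
  set y : X × Bool := (x₂, true)
  set W : List (X × Bool) :=
    (range n).flatMap fun i => replicate (i + 1) x ++ replicate (i + 1) y with hW
  have hprod : (((List.range n).map
      (fun i => FreeGroup.of x₁ ^ (i + 1) * FreeGroup.of x₂ ^ (i + 1))).prod)
      = FreeGroup.mk W := by
    rw [hW, ← prod_map_mk]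
    congr 1
    apply map_congr_left
    intro i _
    rw [of_pow, of_pow, FreeGroup.mul_mk]
  have htrue : ∀ p ∈ W, p.2 = true := by
    intro p hp
    rw [hW] at hp
    simp only [mem_flatMap, mem_append, mem_replicate] at hp
    obtain ⟨i, _, hp | hp⟩ := hp <;> rw [hp.2] <;> rfl
  have htoWord : (FreeGroup.mk W).toWord = W := by
    rw [FreeGroup.toWord_mk, reduce_eq_self _ htrue]
  set r : X × Bool → X × Bool → Bool := fun a b => a.1 == b.1 with hrdef
  have hsplit : splitBy r W = (range n).flatMap
      fun k => [replicate (k + 1) x, replicate (k + 1) y] := by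
    apply splitBy_blocks r x y
    · simp [hrdef, x]
    · simp [hrdef, y]
    · simp [hrdef, x, y, h]
    · simp [hrdef, x, y, Ne.symm h]
  have hsyl : syllableLengths (FreeGroup.mk W)
      = (range n).flatMap fun k => [k + 1, k + 1] := by
    rw [syllableLengths, htoWord]
    show (splitBy r W).map length = _
    rw [hsplit, map_flatMap]
    simp
  rw [hprod, delta, hsyl, foldl_add_sum, zero_add]
  show ps ((range n).flatMap fun k => [k + 1, k + 1]) = (n : ℤ) - 1
  rw [range_eq_range']
  exact ps_blocks n hn 0
end

section
/- The palindromic width of a non-abelian free group F is infinite: for every k ∈ ℕ there exists an element of F that is not a product of k palindromes with respect to a given basis X. -/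
namespace PalAux

variable {X : Type*} [DecidableEq X]

def e (x y : X) (p q : X × Bool) : ℤ :=
  (if p = (x, true) ∧ q = (y, true) then 1 else 0) +
  (if p = (x, false) ∧ q = (y, false) then 1 else 0)

def φ (x y : X) (p q : X × Bool) : ℤ := e x y p q - e x y q p

lemma e_nonneg (x y : X) (p q : X × Bool) : 0 ≤ e x y p q := by
  unfold e; split_ifs <;> norm_num

lemma e_le (x y : X) (p q : X × Bool) : e x y p q ≤ 2 := by
  unfold e; split_ifs <;> norm_num

lemma abs_φ_le (x y : X) (p q : X × Bool) : |φ x y p q| ≤ 2 := by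
  rw [abs_le]
  constructor
  · have := e_nonneg x y p q; have := e_le x y q p; unfold φ; linarith
  · have := e_le x y p q; have := e_nonneg x y q p; unfold φ; linarith

lemma φ_antisymm (x y : X) (p q : X × Bool) : φ x y q p = - φ x y p q := by
  unfold φ; ring

def fl (p : X × Bool) : X × Bool := (p.1, !p.2)

lemma e_fl (x y : X) (p q : X × Bool) : e x y (fl p) (fl q) = e x y p q := by
  obtain ⟨a, b⟩ := p; obtain ⟨c, d⟩ := q
  cases b <;> cases d <;> simp [e, fl, Prod.ext_iff]

lemma φ_fl (x y : X) (p q : X × Bool) : φ x y (fl p) (fl q) = φ x y p q := by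
  unfold φ; rw [e_fl, e_fl]

def f (x y : X) : List (X × Bool) → ℤ
  | [] => 0
  | [_] => 0
  | p :: q :: t => φ x y p q + f x y (q :: t)

lemma f_nil (x y : X) : f x y [] = 0 := rfl
lemma f_single (x y : X) (p : X × Bool) : f x y [p] = 0 := rfl
lemma f_cons_cons (x y : X) (p q : X × Bool) (t : List (X × Bool)) :
    f x y (p :: q :: t) = φ x y p q + f x y (q :: t) := rfl

def jn (x y : X) (L M : List (X × Bool)) : ℤ :=
  match L.getLast?, M.head? with
  | some p, some q => φ x y p q
  | _, _ => 0

lemma abs_jn_le (x y : X) (L M : List (X × Bool)) : |jn x y L M| ≤ 2 := by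
  unfold jn
  split
  · apply abs_φ_le
  · norm_num

lemma f_append (x y : X) (L M : List (X × Bool)) :
    f x y (L ++ M) = f x y L + f x y M + jn x y L M := by
  induction L with
  | nil => simp [f_nil, jn]
  | cons p t ih =>
    cases t with
    | nil =>
      cases M with
      | nil => simp [f_nil, f_single, jn]
      | cons q s => simp [f_single, f_cons_cons, jn]; ring
    | cons r s =>
      have h0 : (p :: r :: s) ++ M = p :: r :: (s ++ M) := rfl
      rw [List.cons_append] at ih
      rw [h0, f_cons_cons, f_cons_cons, ih]
      have hj : jn x y (p :: r :: s) M = jn x y (r :: s) M := by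
        unfold jn; rw [List.getLast?_cons_cons]
      rw [hj]; ring

lemma jn_single_rev (x y : X) (p : X × Bool) (t : List (X × Bool)) :
    jn x y t.reverse [p] = - jn x y [p] t := by
  cases t with
  | nil => simp [jn]
  | cons q s =>
    unfold jn
    rw [List.getLast?_reverse]
    simp only [List.head?_cons, List.getLast?_singleton]
    rw [φ_antisymm]

lemma f_reverse (x y : X) (L : List (X × Bool)) : f x y L.reverse = - f x y L := by
  induction L with
  | nil => simp [f_nil]
  | cons p t ih =>
    have h1 : (p :: t).reverse = t.reverse ++ [p] := by simp
    have h2 : (p :: t) = [p] ++ t := rfl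
    rw [h1, f_append, ih, f_single, jn_single_rev, h2, f_append, f_single]
    ring

lemma f_map_fl (x y : X) (L : List (X × Bool)) : f x y (L.map fl) = f x y L := by
  induction L with
  | nil => rfl
  | cons p t ih =>
    cases t with
    | nil => rfl
    | cons q s =>
      have : (p :: q :: s).map fl = fl p :: fl q :: s.map fl := rfl
      rw [this, f_cons_cons, φ_fl]
      have : fl q :: s.map fl = (q :: s).map fl := rfl
      rw [this, ih, f_cons_cons]

lemma f_invRev (x y : X) (L : List (X × Bool)) : f x y (FreeGroup.invRev L) = - f x y L := by
  unfold FreeGroup.invRev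
  rw [f_reverse]
  have : (List.map (fun g : X × Bool => (g.1, !g.2)) L) = L.map fl := rfl
  rw [this, f_map_fl]

/-- the no-cancellation condition between adjacent letters -/
def R' (p q : X × Bool) : Prop := ¬(p.1 = q.1 ∧ p.2 = !q.2)

lemma reduce_eq_self {L : List (X × Bool)} (h : List.Chain' R' L) :
    FreeGroup.reduce L = L := by
  induction L with
  | nil => rfl
  | cons p t ih =>
    rw [FreeGroup.reduce.cons, ih h.tail]
    cases t with
    | nil => rfl
    | cons q s =>
      have hr : R' p q := (List.isChain_cons_cons.mp h).1
      simp only [R'] at hr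
      simp [hr]

lemma chain'_reduce (L : List (X × Bool)) : List.Chain' R' (FreeGroup.reduce L) := by
  induction L with
  | nil => exact List.isChain_nil
  | cons p t ih =>
    rw [FreeGroup.reduce.cons]
    rcases h : FreeGroup.reduce t with _ | ⟨q, s⟩
    · exact List.isChain_singleton _
    · rw [h] at ih
      dsimp only
      by_cases hc : p.1 = q.1 ∧ p.2 = !q.2
      · rw [if_pos hc]; exact ih.tail
      · rw [if_neg hc]; exact List.isChain_cons_cons.mpr ⟨hc, ih⟩

lemma chain'_toWord (w : FreeGroup X) : List.Chain' R' w.toWord := by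
  rw [← FreeGroup.reduce_toWord]
  exact chain'_reduce _

/-- cancellation structure of a product of two reduced words -/
lemma struct (L1 : List (X × Bool)) :
    ∀ L2 : List (X × Bool), List.Chain' R' L1 → List.Chain' R' L2 →
      ∃ A B C, L1 = A ++ C ∧ L2 = FreeGroup.invRev C ++ B ∧
        FreeGroup.reduce (L1 ++ L2) = A ++ B := by
  induction L1 using List.reverseRecOn with
  | nil =>
    intro L2 _ h2
    exact ⟨[], L2, [], by simp, by simp [FreeGroup.invRev], by simpa using reduce_eq_self h2⟩
  | append_singleton A1 p ih =>
    intro L2 h1 h2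
    rcases L2 with _ | ⟨q, M⟩
    · exact ⟨A1 ++ [p], [], [], by simp, by simp [FreeGroup.invRev],
        by simpa using reduce_eq_self h1⟩
    · by_cases hc : q = (p.1, !p.2)
      · subst hc
        have hA1 : List.Chain' R' A1 := h1.prefix ⟨[p], rfl⟩
        have hM : List.Chain' R' M := h2.tail
        obtain ⟨A, B, C, e1, e2, e3⟩ := ih M hA1 hM
        refine ⟨A, B, C ++ [p], by rw [e1]; simp, ?_, ?_⟩
        · have : FreeGroup.invRev (C ++ [p]) = (p.1, !p.2) :: FreeGroup.invRev C := by
            simp [FreeGroup.invRev]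
          rw [this, e2]; rfl
        · have heq : (A1 ++ [p]) ++ ((p.1, !p.2) :: M) =
              A1 ++ (p.1, p.2) :: (p.1, !p.2) :: M := by simp
          rw [heq, FreeGroup.reduce.Step.eq FreeGroup.Red.Step.not, e3]
      · have hjunc : ∀ a ∈ (A1 ++ [p]).getLast?, ∀ b ∈ (q :: M).head?, R' a b := by
          intro a ha b hb
          rw [List.getLast?_concat] at ha
          simp only [List.head?_cons, Option.mem_some_iff] at ha hb
          subst ha; subst hb
          rintro ⟨hh1, hh2⟩
          apply hc
          obtain ⟨qa, qb⟩ := q; obtain ⟨pa, pb⟩ := p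
          simp_all
        have hred : List.Chain' R' ((A1 ++ [p]) ++ (q :: M)) :=
          List.isChain_append.mpr ⟨h1, h2, hjunc⟩
        exact ⟨A1 ++ [p], q :: M, [], by simp, by simp [FreeGroup.invRev],
          reduce_eq_self hred⟩

lemma toWord_mul (u v : FreeGroup X) :
    (u * v).toWord = FreeGroup.reduce (u.toWord ++ v.toWord) := by
  have : u * v = FreeGroup.mk (u.toWord ++ v.toWord) := by
    rw [← FreeGroup.mul_mk, FreeGroup.mk_toWord, FreeGroup.mk_toWord]
  rw [this, FreeGroup.toWord_mk]

lemma key (x y : X) (u v : FreeGroup X) :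
    |f x y (u * v).toWord - f x y u.toWord - f x y v.toWord| ≤ 6 := by
  obtain ⟨A, B, C, e1, e2, e3⟩ := struct u.toWord v.toWord (chain'_toWord u) (chain'_toWord v)
  rw [toWord_mul, e3, e1, e2, f_append, f_append, f_append, f_invRev]
  have h1 := abs_jn_le x y A B
  have h2 := abs_jn_le x y A C
  have h3 := abs_jn_le x y (FreeGroup.invRev C) B
  rw [abs_le] at h1 h2 h3 ⊢
  constructor <;> linarith [h1.1, h1.2, h2.1, h2.2, h3.1, h3.2]

lemma f_palindrome (x y : X) (p : FreeGroup X) (hp : p.toWord.reverse = p.toWord) :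
    f x y p.toWord = 0 := by
  have := f_reverse x y p.toWord
  rw [hp] at this
  linarith

lemma prod_bound (x y : X) (l : List (FreeGroup X))
    (hl : ∀ p ∈ l, p.toWord.reverse = p.toWord) :
    |f x y l.prod.toWord| ≤ 6 * l.length := by
  induction l with
  | nil => simp [f_nil]
  | cons p t ih =>
    have hp : f x y p.toWord = 0 := f_palindrome x y p (hl p (by simp))
    have ht : |f x y t.prod.toWord| ≤ 6 * t.length := ih (fun q hq => hl q (by simp [hq]))
    have hk := key x y p t.prod
    rw [List.prod_cons]
    rw [abs_le] at ht hk ⊢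
    simp only [List.length_cons]
    push_cast
    constructor <;> linarith [hk.1, hk.2, ht.1, ht.2]

/-- the witness word `(x y x⁻¹ y⁻¹)^n` -/
def wit (x y : X) : ℕ → List (X × Bool)
  | 0 => []
  | n + 1 => (x, true) :: (y, true) :: (x, false) :: (y, false) :: wit x y n

omit [DecidableEq X] in
lemma wit_chain_aux {x y : X} (hxy : x ≠ y) :
    ∀ n, List.Chain' R' ((y, false) :: wit x y n) := by
  intro n
  induction n with
  | zero => exact List.isChain_singleton _
  | succ n ih =>
    rw [wit]
    refine List.isChain_cons_cons.mpr ⟨?_, List.isChain_cons_cons.mpr ⟨?_, List.isChain_cons_cons.mpr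
      ⟨?_, List.isChain_cons_cons.mpr ⟨?_, ih⟩⟩⟩⟩ <;> simp [R', hxy, hxy.symm]

lemma wit_chain {x y : X} (hxy : x ≠ y) (n : ℕ) : List.Chain' R' (wit x y n) := by
  cases n with
  | zero => exact List.isChain_nil
  | succ n =>
    rw [wit]
    refine List.isChain_cons_cons.mpr ⟨?_, List.isChain_cons_cons.mpr ⟨?_, List.isChain_cons_cons.mpr
      ⟨?_, wit_chain_aux hxy n⟩⟩⟩ <;> simp [R', hxy, hxy.symm]

lemma φ_ab {x y : X} (hxy : x ≠ y) : φ x y (x, true) (y, true) = 1 := by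
  simp [φ, e, Prod.ext_iff, hxy.symm]

lemma φ_cd {x y : X} (hxy : x ≠ y) : φ x y (x, false) (y, false) = 1 := by
  simp [φ, e, Prod.ext_iff, hxy.symm]

lemma φ_bc (x y : X) : φ x y (y, true) (x, false) = 0 := by
  simp [φ, e, Prod.ext_iff]

lemma φ_da (x y : X) : φ x y (y, false) (x, true) = 0 := by
  simp [φ, e, Prod.ext_iff]

lemma f_wit {x y : X} (hxy : x ≠ y) : ∀ n, f x y (wit x y n) = 2 * n := by
  intro n
  induction n with
  | zero => simp [wit, f_nil]
  | succ n ih =>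
    rw [wit, f_cons_cons, f_cons_cons, f_cons_cons, φ_ab hxy, φ_cd hxy, φ_bc]
    have : f x y ((y, false) :: wit x y n) = f x y (wit x y n) := by
      cases n with
      | zero => simp [wit, f_single, f_nil]
      | succ m => rw [wit, f_cons_cons, φ_da]; ring
    rw [this, ih]
    push_cast
    ring

end PalAux

/-- `w` is a product of at most `k` elements of `S`. -/
def IsProductOfAtMost {G : Type*} [Monoid G] (S : Set G) (k : ℕ) (w : G) : Prop :=
  ∃ l : List G, l.length ≤ k ∧ (∀ x ∈ l, x ∈ S) ∧ l.prod = w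

/-- the palindromic width of a non-abelian free group is infinite. -/
theorem palindromic_width_infinite {X : Type*} [DecidableEq X]
    (hX : ∃ x y : X, x ≠ y) (k : ℕ) :
    ∃ w : FreeGroup X,
      ¬ IsProductOfAtMost {p : FreeGroup X | IsPalindrome p} k w := by
  obtain ⟨x, y, hxy⟩ := hX
  refine ⟨FreeGroup.mk (PalAux.wit x y (3 * k + 1)), ?_⟩
  rintro ⟨l, hlen, hmem, hprod⟩
  have htw : (FreeGroup.mk (PalAux.wit x y (3 * k + 1))).toWord = PalAux.wit x y (3 * k + 1) := by
    rw [FreeGroup.toWord_mk, PalAux.reduce_eq_self (PalAux.wit_chain hxy _)]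
  have hb : |PalAux.f x y l.prod.toWord| ≤ 6 * l.length :=
    PalAux.prod_bound x y l (fun p hp => hmem p hp)
  rw [hprod, htw, PalAux.f_wit hxy] at hb
  rw [abs_le] at hb
  have := hb.2
  have hlen' : (l.length : ℤ) ≤ k := by exact_mod_cast hlen
  push_cast at this
  linarith
end

section
/- Every primitive element of the free group F_2 of rank 2 is a product of at most two palindromes with respect to a fixed basis {x, y}. -/
set_option linter.unusedSectionVars false

namespace PalAux
open FreeGroup List

variable {α : Type*} [DecidableEq α]

/-- Two letters can sit next to each other in a reduced word. -/
def Compat (a b : α × Bool) : Prop := ¬(a.1 = b.1 ∧ a.2 = !b.2)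

/-- A reduced word. -/
def IsRed (L : List (α × Bool)) : Prop := List.Chain' Compat L

theorem isRed_nil : IsRed ([] : List (α × Bool)) := List.isChain_nil

theorem isRed_singleton (a : α × Bool) : IsRed [a] := List.isChain_singleton a

theorem IsRed.infix {L L' : List (α × Bool)} (h : IsRed L) (h' : L' <:+: L) : IsRed L' :=
  List.IsChain.infix h h'

theorem IsRed.suffix {L L' : List (α × Bool)} (h : IsRed L) (h' : L' <:+ L) : IsRed L' :=
  List.IsChain.suffix h h'

theorem IsRed.prefix {L L' : List (α × Bool)} (h : IsRed L) (h' : L' <+: L) : IsRed L' :=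
  List.IsChain.prefix h h'

theorem invRev_append' (K M : List (α × Bool)) :
    invRev (K ++ M) = invRev M ++ invRev K := by
  simp [invRev]

theorem invRev_cons' (b : α × Bool) (T : List (α × Bool)) :
    invRev (b :: T) = invRev T ++ [(b.1, !b.2)] := by
  simp [invRev]

theorem invRev_singleton' (b : α × Bool) : invRev [b] = [(b.1, !b.2)] := by
  simp [invRev]

theorem reduce_eq_self_of_isRed : ∀ {L : List (α × Bool)}, IsRed L → reduce L = L := by
  intro L
  induction L with
  | nil => intro _; rfl
  | cons x L ih =>
    intro h
    have hL : IsRed L := h.tail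
    rw [reduce.cons, ih hL]
    cases L with
    | nil => rfl
    | cons hd tl =>
      have hc : Compat x hd := List.isChain_cons_cons.1 h |>.1
      simp only [Compat] at hc
      simp [hc]

theorem isRed_reduce (L : List (α × Bool)) : IsRed (reduce L) := by
  induction L with
  | nil => exact isRed_nil
  | cons x L ih =>
    rw [reduce.cons]
    rcases h : reduce L with _ | ⟨hd, tl⟩
    · exact isRed_singleton x
    · rw [h] at ih
      by_cases hc : x.1 = hd.1 ∧ x.2 = !hd.2
      · simp only [if_pos hc]
        exact ih.tail
      · simp only [if_neg hc]
        exact List.isChain_cons_cons.2 ⟨hc, ih⟩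

theorem isRed_toWord (x : FreeGroup α) : IsRed x.toWord := by
  rw [← mk_toWord (x := x), toWord_mk]
  exact isRed_reduce _

theorem toWord_mk_of_isRed {L : List (α × Bool)} (h : IsRed L) : (mk L).toWord = L := by
  rw [toWord_mk, reduce_eq_self_of_isRed h]

theorem norm_eq_length (x : FreeGroup α) : FreeGroup.norm x = x.toWord.length := rfl

theorem norm_mk_of_isRed {L : List (α × Bool)} (h : IsRed L) :
    FreeGroup.norm (mk L) = L.length := by
  rw [norm_eq_length, toWord_mk_of_isRed h]

/-- maximal cancellation decomposition of a product of two reduced words -/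
theorem exists_cancel : ∀ (L M : List (α × Bool)), IsRed L → IsRed M →
    ∃ L' C M', L = L' ++ C ∧ M = invRev C ++ M' ∧ IsRed (L' ++ M') := by
  intro L
  induction L using List.reverseRecOn with
  | nil =>
    intro M _ hM
    exact ⟨[], [], M, by simp [invRev], by simp [invRev], by simpa using hM⟩
  | append_singleton L₀ u ih =>
    intro M hL hM
    cases M with
    | nil =>
      exact ⟨L₀ ++ [u], [], [], by simp [invRev], by simp [invRev], by simpa using hL⟩
    | cons v M₀ =>
      by_cases hc : u = (v.1, !v.2)
      · obtain ⟨L', C, M', h1, h2, h3⟩ := ih M₀ (hL.prefix ⟨[u], rfl⟩) hM.tail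
        refine ⟨L', C ++ [u], M', by rw [h1]; simp, ?_, h3⟩
        rw [invRev_append', invRev_singleton', h2, hc]
        simp
      · refine ⟨L₀ ++ [u], [], v :: M₀, by simp [invRev], by simp [invRev], ?_⟩
        show List.Chain' Compat ((L₀ ++ [u]) ++ v :: M₀)
        apply List.IsChain.append hL hM
        intro x hx y hy
        simp at hx hy
        subst hx
        cases hy
        intro hcc
        exact hc (Prod.ext hcc.1 hcc.2)

theorem mul_decomp (x y : FreeGroup α) :
    ∃ X C Y, x.toWord = X ++ C ∧ y.toWord = invRev C ++ Y ∧ (x * y).toWord = X ++ Y := by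
  obtain ⟨X, C, Y, h1, h2, h3⟩ := exists_cancel x.toWord y.toWord (isRed_toWord x) (isRed_toWord y)
  refine ⟨X, C, Y, h1, h2, ?_⟩
  have : x * y = mk (X ++ Y) := by
    rw [← mk_toWord (x := x), ← mk_toWord (x := y), h1, h2]
    rw [← mul_mk, ← mul_mk, ← mul_mk]
    have h4 : mk (invRev C) = (mk C)⁻¹ := (inv_mk).symm
    rw [h4]
    group
  rw [this, toWord_mk_of_isRed h3]

/-- a reduced word equal to its own inverse-reverse is empty -/
theorem eq_invRev_nil : ∀ (B : List (α × Bool)), IsRed B → invRev B = B → B = [] := by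
  have key : ∀ (n : ℕ) (B : List (α × Bool)), B.length = n → IsRed B → invRev B = B → B = [] := by
    intro n
    induction n using Nat.strong_induction_on with
    | _ n ih =>
      intro B hn hB h
      cases B with
      | nil => rfl
      | cons b T =>
        rw [invRev_cons'] at h
        rcases hT : invRev T with _ | ⟨b', K⟩
        · rw [hT] at h
          simp only [List.nil_append] at h
          injection h with h1 h2
          have h3 := congrArg Prod.snd h1
          simp at h3
        · rw [hT] at h
          have hb' : b' = b ∧ K ++ [(b.1, !b.2)] = T := by
            have := h
            rw [List.cons_append] at this
            exact ⟨(List.cons.injEq _ _ _ _ ▸ this).1, (List.cons.injEq _ _ _ _ ▸ this).2⟩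
          obtain ⟨hb'1, hKT⟩ := hb'
          -- T = K ++ [(b.1,!b.2)], invRev T = b :: K
          have hinvK : invRev K = K := by
            have : invRev T = invRev [(b.1, !b.2)] ++ invRev K := by
              rw [← hKT, invRev_append']
            rw [hT, hb'1, invRev_singleton'] at this
            simp at this
            exact this.symm
          have hKred : IsRed K := by
            apply hB.infix
            refine ⟨[b], [(b.1, !b.2)], ?_⟩
            rw [← hKT]
            simp
          have hKlen : K.length < n := by
            have : T.length = K.length + 1 := by rw [← hKT]; simp
            simp only [List.length_cons] at hn
            omega
          have hK := ih K.length hKlen K rfl hKred hinvK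
          subst hK
          -- B = [b, (b.1, !b.2)] contradicts reducedness
          simp at hKT
          rw [← hKT] at hB
          have := List.isChain_cons_cons.1 hB |>.1
          simp [Compat] at this
  intro B
  exact key B.length B rfl

/-- bound on cancellation: the cancelled part is less than half, unless everything vanishes -/
theorem cancel_bound {L X C Y : List (α × Bool)} (hL : IsRed L)
    (h1 : L = X ++ C) (h2 : L = invRev C ++ Y) :
    2 * C.length < L.length ∨ L = [] := by
  by_cases hnil : L = []
  · right; exact hnil
  left
  by_contra hcon
  push_neg at hcon
  have hlen1 : L.length = X.length + C.length := by rw [h1]; simp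
  have hlen2 : L.length = C.length + Y.length := by rw [h2]; simp [invRev_length]
  -- overlap: X is a prefix of invRev C
  have hXpre : X.length ≤ C.length := by omega
  have p1 : X <+: L := ⟨C, h1.symm⟩
  have p2 : invRev C <+: L := ⟨Y, h2.symm⟩
  have hpre : X <+: invRev C := by
    rcases List.prefix_or_prefix_of_prefix p1 p2 with h | h
    · exact h
    · have hle := h.length_le
      rw [invRev_length] at hle
      have heq : invRev C = X := h.eq_of_length (by rw [invRev_length]; omega)
      rw [heq]
  obtain ⟨B, hB⟩ := hpre
  -- L = X ++ B ++ Y and C = B ++ Y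
  have hC : C = B ++ Y := by
    apply List.append_cancel_left (as := X)
    rw [← h1, h2, ← hB]
    simp
  have hBlen : B.length = 2 * C.length - L.length := by
    have := congrArg List.length hB
    simp [invRev_length] at this
    omega
  have hinv : invRev Y ++ invRev B = X ++ B := by
    rw [← invRev_append', ← hC, hB]
  have hXY : invRev Y = X ∧ invRev B = B := by
    apply List.append_inj hinv
    rw [invRev_length]
    omega
  have hBred : IsRed B := by
    apply hL.infix
    exact ⟨X, Y, by rw [h2, ← hB, List.append_assoc]⟩
  have hBnil : B = [] := eq_invRev_nil B hBred hXY.2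
  subst hBnil
  simp at hBlen
  -- now 2|C| = |L| and L = invRev C ++ C
  have hCnil : C ≠ [] := by
    intro h
    subst h
    simp at hlen1 hlen2
    exact hnil (by
      have : L.length = 0 := by omega
      exact List.length_eq_zero_iff.mp this)
  rcases C with _ | ⟨v, C'⟩
  · exact hCnil rfl
  have hY : Y = v :: C' := by simpa using hC.symm
  have hLL : L = invRev C' ++ [(v.1, !v.2), v] ++ C' := by
    rw [h2, hY, invRev_cons']
    simp
  have := hL.infix (L' := [(v.1, !v.2), v]) ⟨invRev C', C', by rw [hLL]⟩
  have hcp := List.isChain_cons_cons.1 this |>.1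
  simp [Compat] at hcp

theorem norm_lt_norm_sq {x : FreeGroup α} (hx : x ≠ 1) :
    FreeGroup.norm x < FreeGroup.norm (x * x) := by
  obtain ⟨X, C, Y, h1, h2, h3⟩ := mul_decomp x x
  have hb := cancel_bound (isRed_toWord x) h1 h2
  rcases hb with hb | hb
  · have e1 : FreeGroup.norm x = X.length + C.length := by rw [norm_eq_length, h1]; simp
    have e2 : FreeGroup.norm x = C.length + Y.length := by
      rw [norm_eq_length, h2]; simp [invRev_length]
    have e3 : FreeGroup.norm (x * x) = X.length + Y.length := by rw [norm_eq_length, h3]; simp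
    have hb' : 2 * C.length < FreeGroup.norm x := by rw [norm_eq_length]; exact hb
    omega
  · exact absurd (toWord_eq_nil_iff.mp hb) hx

-- PART B

/-- word-reversal anti-automorphism -/
def rev (x : FreeGroup α) : FreeGroup α :=
  (FreeGroup.lift (fun a => MulOpposite.op (FreeGroup.of a)) x).unop

@[simp] theorem rev_of (a : α) : rev (of a) = of a := by
  simp [rev]

@[simp] theorem rev_one : rev (1 : FreeGroup α) = 1 := by
  simp [rev]

theorem rev_mul (x y : FreeGroup α) : rev (x * y) = rev y * rev x := by
  simp [rev]

theorem rev_inv (x : FreeGroup α) : rev x⁻¹ = (rev x)⁻¹ := by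
  simp [rev]

theorem rev_mk : ∀ (L : List (α × Bool)), rev (mk L) = mk L.reverse := by
  intro L
  induction L with
  | nil => show rev 1 = mk []; rw [rev_one]; rfl
  | cons u L ih =>
    have h1 : mk (u :: L) = mk [u] * mk L := by rw [mul_mk]; rfl
    have h2 : rev (mk [u]) = mk [u] := by
      rcases u with ⟨a, _ | _⟩
      · show rev ((of a)⁻¹) = (of a)⁻¹
        rw [rev_inv, rev_of]
      · show rev (of a) = of a
        exact rev_of a
    rw [h1, rev_mul, ih, h2, mul_mk]
    simp

theorem compat_symm {a b : α × Bool} (h : Compat a b) : Compat b a := by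
  simp only [Compat] at *
  intro ⟨h1, h2⟩
  exact h ⟨h1.symm, by rw [h2]; simp⟩

theorem isRed_reverse {L : List (α × Bool)} (h : IsRed L) : IsRed L.reverse := by
  unfold IsRed at h ⊢
  show List.IsChain Compat L.reverse
  rw [List.isChain_reverse]
  exact h.imp fun a b hc => compat_symm hc

theorem toWord_rev (x : FreeGroup α) : (rev x).toWord = x.toWord.reverse := by
  conv_lhs => rw [← mk_toWord (x := x)]
  rw [rev_mk, toWord_mk_of_isRed (isRed_reverse (isRed_toWord x))]

theorem rev_rev (x : FreeGroup α) : rev (rev x) = x := by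
  apply toWord_injective
  rw [toWord_rev, toWord_rev, List.reverse_reverse]

theorem norm_rev (x : FreeGroup α) : FreeGroup.norm (rev x) = FreeGroup.norm x := by
  rw [norm_eq_length, norm_eq_length, toWord_rev, List.length_reverse]

/-- the conjugating-palindrome invariant -/
def Qp (a b : FreeGroup α) : Prop :=
  ∃ c, rev c = c ∧ rev a = c⁻¹ * a * c ∧ rev b = c⁻¹ * b * c

theorem Qp.swap {a b : FreeGroup α} (h : Qp a b) : Qp b a := by
  obtain ⟨c, h1, h2, h3⟩ := h
  exact ⟨c, h1, h3, h2⟩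

theorem Qp.inva {a b : FreeGroup α} (h : Qp a b) : Qp a⁻¹ b := by
  obtain ⟨c, h1, h2, h3⟩ := h
  refine ⟨c, h1, ?_, h3⟩
  rw [rev_inv, h2]
  group

theorem Qp.mula {a b : FreeGroup α} (h : Qp a b) : Qp (a * b) b := by
  obtain ⟨c, h1, h2, h3⟩ := h
  refine ⟨b⁻¹ * c, ?_, ?_, ?_⟩
  · rw [rev_mul, h1, rev_inv, h3]
    group
  · rw [rev_mul, h2, h3]
    group
  · rw [h3]
    group

theorem Qp.unconj {a b : FreeGroup α} (g : FreeGroup α)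
    (h : Qp (g⁻¹ * a * g) (g⁻¹ * b * g)) : Qp a b := by
  obtain ⟨c, h1, h2, h3⟩ := h
  refine ⟨g * c * rev g, ?_, ?_, ?_⟩
  · rw [rev_mul, rev_mul, rev_rev, h1]
    group
  · have h2' : rev a = (rev g)⁻¹ * (c⁻¹ * (g⁻¹ * a * g) * c) * rev g := by
      rw [← h2, rev_mul, rev_mul, rev_inv]
      group
    rw [h2']
    group
  · have h3' : rev b = (rev g)⁻¹ * (c⁻¹ * (g⁻¹ * b * g) * c) * rev g := by
      rw [← h3, rev_mul, rev_mul, rev_inv]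
      group
    rw [h3']
    group

-- PART C : derived moves and basis pairs

theorem Qp.invb {a b : FreeGroup α} (h : Qp a b) : Qp a b⁻¹ := h.swap.inva.swap

theorem Qp.of_inva {a b : FreeGroup α} (h : Qp a⁻¹ b) : Qp a b := by
  have := h.inva
  rwa [inv_inv] at this

theorem Qp.of_invb {a b : FreeGroup α} (h : Qp a b⁻¹) : Qp a b := by
  have := h.invb
  rwa [inv_inv] at this

theorem Qp.of_mula {a b : FreeGroup α} (h : Qp (a * b) b) : Qp a b := by
  have := h.invb.mula
  rw [mul_inv_cancel_right] at this
  exact this.of_invb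

theorem Qp.of_mula' {a b : FreeGroup α} (h : Qp (b * a) b) : Qp a b := by
  -- a = b⁻¹ * (b*a)
  have h1 := h.inva             -- Qp ((b*a)⁻¹) b
  have h2 := h1.mula            -- Qp ((b*a)⁻¹ * b) b
  have h3 : (b * a)⁻¹ * b = a⁻¹ := by group
  rw [h3] at h2
  exact h2.of_inva

theorem Qp.of_mulb {a b : FreeGroup α} (h : Qp a (b * a)) : Qp a b :=
  (Qp.of_mula h.swap).swap

theorem Qp.of_mulb' {a b : FreeGroup α} (h : Qp a (a * b)) : Qp a b :=
  (Qp.of_mula' h.swap).swap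

abbrev F2 := FreeGroup (Fin 2)

def IsBasisPair (a b : F2) : Prop :=
  ∃ φ : F2 ≃* F2, φ (FreeGroup.of 0) = a ∧ φ (FreeGroup.of 1) = b

/-- build an automorphism of F2 from two mutually inverse endomorphisms -/
def mkAut (f g : F2 →* F2) (h1 : ∀ i, g (f (FreeGroup.of i)) = FreeGroup.of i)
    (h2 : ∀ i, f (g (FreeGroup.of i)) = FreeGroup.of i) : F2 ≃* F2 :=
  MonoidHom.toMulEquiv f g
    (FreeGroup.ext_hom _ _ (by intro i; simp [h1 i]))
    (FreeGroup.ext_hom _ _ (by intro i; simp [h2 i]))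

@[simp] theorem mkAut_apply (f g : F2 →* F2) (h1 h2) (x : F2) : mkAut f g h1 h2 x = f x := rfl

def swapAut : F2 ≃* F2 :=
  mkAut (FreeGroup.lift ![FreeGroup.of 1, FreeGroup.of 0])
        (FreeGroup.lift ![FreeGroup.of 1, FreeGroup.of 0])
        (by intro i; fin_cases i <;> simp)
        (by intro i; fin_cases i <;> simp)

def invAAut : F2 ≃* F2 :=
  mkAut (FreeGroup.lift ![(FreeGroup.of 0)⁻¹, FreeGroup.of 1])
        (FreeGroup.lift ![(FreeGroup.of 0)⁻¹, FreeGroup.of 1])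
        (by intro i; fin_cases i <;> simp)
        (by intro i; fin_cases i <;> simp)

def mulAAut : F2 ≃* F2 :=
  mkAut (FreeGroup.lift ![FreeGroup.of 0 * FreeGroup.of 1, FreeGroup.of 1])
        (FreeGroup.lift ![FreeGroup.of 0 * (FreeGroup.of 1)⁻¹, FreeGroup.of 1])
        (by intro i; fin_cases i <;> simp)
        (by intro i; fin_cases i <;> simp)

theorem IsBasisPair.swap {a b : F2} (h : IsBasisPair a b) : IsBasisPair b a := by
  obtain ⟨φ, h0, h1⟩ := h
  refine ⟨swapAut.trans φ, ?_, ?_⟩ <;> simp [swapAut, MulEquiv.trans_apply, h0, h1]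

theorem IsBasisPair.inva {a b : F2} (h : IsBasisPair a b) : IsBasisPair a⁻¹ b := by
  obtain ⟨φ, h0, h1⟩ := h
  refine ⟨invAAut.trans φ, ?_, ?_⟩ <;> simp [invAAut, MulEquiv.trans_apply, h0, h1]

theorem IsBasisPair.mula {a b : F2} (h : IsBasisPair a b) : IsBasisPair (a * b) b := by
  obtain ⟨φ, h0, h1⟩ := h
  refine ⟨mulAAut.trans φ, ?_, ?_⟩ <;> simp [mulAAut, MulEquiv.trans_apply, h0, h1]

theorem IsBasisPair.conj {a b : F2} (g : F2) (h : IsBasisPair a b) :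
    IsBasisPair (g⁻¹ * a * g) (g⁻¹ * b * g) := by
  obtain ⟨φ, h0, h1⟩ := h
  refine ⟨φ.trans (MulAut.conj g⁻¹), ?_, ?_⟩ <;>
    simp [MulEquiv.trans_apply, h0, h1, MulAut.conj_apply, mul_assoc]

theorem IsBasisPair.invb {a b : F2} (h : IsBasisPair a b) : IsBasisPair a b⁻¹ :=
  h.swap.inva.swap

theorem IsBasisPair.mulb {a b : F2} (h : IsBasisPair a b) : IsBasisPair a (b * a) :=
  h.swap.mula.swap

theorem IsBasisPair.ne_one {a b : F2} (h : IsBasisPair a b) : a ≠ 1 ∧ b ≠ 1 := by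
  obtain ⟨φ, h0, h1⟩ := h
  constructor
  · rw [← h0]
    intro hc
    have := φ.injective (by rw [hc, _root_.map_one] : φ (FreeGroup.of 0) = φ 1)
    exact FreeGroup.of_ne_one 0 this
  · rw [← h1]
    intro hc
    have := φ.injective (by rw [hc, _root_.map_one] : φ (FreeGroup.of 1) = φ 1)
    exact FreeGroup.of_ne_one 1 this
-- PART D : parity

def parityHom : FreeGroup (Fin 2) →* Multiplicative (ZMod 2) :=
  FreeGroup.lift (fun _ => Multiplicative.ofAdd (1 : ZMod 2))

theorem parityHom_mk (L : List (Fin 2 × Bool)) :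
    parityHom (mk L) = Multiplicative.ofAdd (L.length : ZMod 2) := by
  induction L with
  | nil =>
    show parityHom 1 = _
    simp
  | cons u L ih =>
    have h1 : mk (u :: L) = mk [u] * mk L := by rw [mul_mk]; rfl
    have h2 : parityHom (mk [u]) = Multiplicative.ofAdd (1 : ZMod 2) := by
      rcases u with ⟨i, _ | _⟩
      · show parityHom ((of i)⁻¹) = _
        rw [_root_.map_inv]
        show (FreeGroup.lift _ (of i))⁻¹ = _
        rw [FreeGroup.lift_apply_of]
        decide
      · show parityHom (of i) = _
        exact FreeGroup.lift_apply_of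
    rw [h1, _root_.map_mul, h2, ih, ← ofAdd_add]
    congr 1
    simp
    ring

theorem parityHom_norm (x : F2) :
    parityHom x = Multiplicative.ofAdd ((FreeGroup.norm x : ZMod 2)) := by
  conv_lhs => rw [← mk_toWord (x := x)]
  rw [parityHom_mk]
  rfl

theorem not_both_even {a b : F2} (h : IsBasisPair a b) :
    ¬ (Even (FreeGroup.norm a) ∧ Even (FreeGroup.norm b)) := by
  rintro ⟨⟨k, hk⟩, ⟨l, hl⟩⟩
  obtain ⟨φ, h0, h1⟩ := h
  have hz : ∀ m : ℕ, ((m + m : ℕ) : ZMod 2) = 0 := by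
    intro m
    push_cast
    ring_nf
    rw [show (2 : ZMod 2) = 0 from rfl]
    ring
  have ha : parityHom a = 1 := by
    rw [parityHom_norm, hk, hz k]
    rfl
  have hb : parityHom b = 1 := by
    rw [parityHom_norm, hl, hz l]
    rfl
  have hcomp : parityHom.comp φ.toMonoidHom = 1 := by
    apply FreeGroup.ext_hom
    intro i
    fin_cases i <;> simp [h0, h1, ha, hb]
  have h2 : parityHom (of 0) = 1 := by
    have h3 := congrArg (fun f : FreeGroup (Fin 2) →* Multiplicative (ZMod 2) =>
      f (φ.symm (of 0))) hcomp
    simpa using h3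
  rw [show parityHom (of 0) = Multiplicative.ofAdd (1 : ZMod 2) from FreeGroup.lift_apply_of] at h2
  exact absurd h2 (by decide)
-- PART E : the survival lemma

def pick (a b : F2) : Fin 2 → F2 := ![a, b]

def P (a b : F2) (l : Fin 2 × Bool) : F2 :=
  cond l.2 (pick a b l.1) (pick a b l.1)⁻¹

def Prodw (a b : F2) (w : List (Fin 2 × Bool)) : F2 := (w.map (P a b)).prod

theorem Prodw_append (a b : F2) (w : List (Fin 2 × Bool)) (v : Fin 2 × Bool) :
    Prodw a b (w ++ [v]) = Prodw a b w * P a b v := by simp [Prodw]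

theorem Prodw_single (a b : F2) (v : Fin 2 × Bool) : Prodw a b [v] = P a b v := by simp [Prodw]

theorem suffix_of_suffix_le {l1 l2 l3 : List (Fin 2 × Bool)} (h1 : l1 <:+ l3) (h2 : l2 <:+ l3)
    (hl : l1.length ≤ l2.length) : l1 <:+ l2 := by
  rcases List.suffix_or_suffix_of_suffix h1 h2 with h | h
  · exact h
  · exact h.eq_of_length (le_antisymm h.length_le hl) ▸ List.suffix_refl _

theorem surv {a b : F2}
    (H0 : ∀ l, P a b l ≠ 1)
    (H1 : ∀ u v, Compat u v →
      FreeGroup.norm (P a b u) ≤ FreeGroup.norm (P a b u * P a b v) ∧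
      FreeGroup.norm (P a b v) ≤ FreeGroup.norm (P a b u * P a b v))
    (HDS : ∀ u' u v, Compat u' u → Compat u v →
      ¬(FreeGroup.norm (P a b u' * P a b u) = FreeGroup.norm (P a b u') ∧
        FreeGroup.norm (P a b u * P a b v) = FreeGroup.norm (P a b v)))
    (HSW : ∀ u' u v, Compat u' u → Compat u v →
      ¬(FreeGroup.norm (P a b u' * P a b u) = FreeGroup.norm (P a b u') ∧
        FreeGroup.norm (P a b u * P a b v) = FreeGroup.norm (P a b u)))
    (H4 : ∀ u' u, Compat u' u →
      FreeGroup.norm (P a b u' * P a b u) = FreeGroup.norm (P a b u') →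
      ∀ l, FreeGroup.norm (P a b u) ≤ FreeGroup.norm (P a b l)) :
    ∀ w : List (Fin 2 × Bool), IsRed w → w ≠ [] →
    ∃ u X S, w.getLast? = some u ∧ (Prodw a b w).toWord = X ++ S ∧ S ≠ [] ∧
      S <:+ (P a b u).toWord ∧ FreeGroup.norm (P a b u) ≤ 2 * S.length ∧
      (2 * S.length = FreeGroup.norm (P a b u) →
        (∃ u', Compat u' u ∧
          FreeGroup.norm (P a b u' * P a b u) = FreeGroup.norm (P a b u')) ∧
        w.length - 1 ≤ FreeGroup.norm (Prodw a b w)) ∧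
      (2 * S.length ≠ FreeGroup.norm (P a b u) → w.length ≤ FreeGroup.norm (Prodw a b w)) ∧
      (2 ≤ w.length → 2 ≤ FreeGroup.norm (Prodw a b w)) := by
  intro w
  induction w using List.reverseRecOn with
  | nil => intro _ h; exact absurd rfl h
  | append_singleton w v ih =>
    intro hred _
    by_cases hw : w = []
    · subst hw
      have hn1 : 1 ≤ FreeGroup.norm (P a b v) := by
        rcases Nat.eq_zero_or_pos (FreeGroup.norm (P a b v)) with h | h
        · exact absurd (FreeGroup.norm_eq_zero.mp h) (H0 v)
        · exact h
      refine ⟨v, [], (P a b v).toWord, by simp, by simp [Prodw_single], ?_, List.suffix_refl _,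
        ?_, ?_, ?_, ?_⟩
      · intro h
        exact H0 v (toWord_eq_nil_iff.mp h)
      · rw [← norm_eq_length]
        omega
      · intro h
        exfalso
        rw [← norm_eq_length] at h
        omega
      · intro _
        simp only [List.nil_append, List.length_singleton, Prodw_single]
        omega
      · intro h
        simp at h
    · have hredw : IsRed w := hred.prefix ⟨[v], rfl⟩
      obtain ⟨u, X, S, hu, hPw, hSne, hSsuf, hSlen, hE0, hE1, h2le⟩ := ih hredw hw
      have hcomp : Compat u v := by
        have h3 := (List.isChain_append.1 hred).2.2
        exact h3 u hu v rfl
      obtain ⟨U₁, C, V₁, d1, d2, d3⟩ := mul_decomp (P a b u) (P a b v)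
      have nu1 : FreeGroup.norm (P a b u) = U₁.length + C.length := by
        rw [norm_eq_length, d1]; simp
      have nv1 : FreeGroup.norm (P a b v) = C.length + V₁.length := by
        rw [norm_eq_length, d2]; simp [invRev_length]
      have nuv : FreeGroup.norm (P a b u * P a b v) = U₁.length + V₁.length := by
        rw [norm_eq_length, d3]; simp
      obtain ⟨h1a, h1b⟩ := H1 u v hcomp
      have hCu : 2 * C.length ≤ FreeGroup.norm (P a b u) := by omega
      have hCv : 2 * C.length ≤ FreeGroup.norm (P a b v) := by omega
      -- strict: C shorter than S
      have hClt : C.length < S.length := by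
        by_contra hcon
        push_neg at hcon
        have h2S : 2 * S.length = FreeGroup.norm (P a b u) := by omega
        obtain ⟨⟨u', hc', hn'⟩, -⟩ := hE0 h2S
        have hswal : FreeGroup.norm (P a b u * P a b v) = FreeGroup.norm (P a b v) := by omega
        exact HDS u' u v hc' hcomp ⟨hn', hswal⟩
      have hCsufS : C <:+ S := suffix_of_suffix_le ⟨U₁, d1.symm⟩ hSsuf (le_of_lt hClt)
      obtain ⟨S₀, hS₀⟩ := hCsufS
      have hS₀len : S₀.length + C.length = S.length := by
        rw [← hS₀]; simp
      have hS₀ne : S₀ ≠ [] := by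
        intro h
        rw [h] at hS₀len
        simp at hS₀len
        omega
      obtain ⟨T, hT⟩ := hSsuf
      have hU₁ : U₁ = T ++ S₀ := by
        have h5 : U₁ ++ C = (T ++ S₀) ++ C := by
          rw [← d1, ← hT, ← hS₀]
          simp
        exact List.append_cancel_right h5
      have hV₁ne : V₁ ≠ [] := by
        intro h
        rw [h] at nv1
        simp at nv1
        have : FreeGroup.norm (P a b v) = 0 := by omega
        exact H0 v (FreeGroup.norm_eq_zero.mp this)
      -- the new reduced word
      have hredU₁V₁ : IsRed (U₁ ++ V₁) := by rw [← d3]; exact isRed_toWord _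
      have hredXS₀ : IsRed (X ++ S₀) := by
        apply (isRed_toWord (Prodw a b w)).prefix
        refine ⟨C, ?_⟩
        rw [hPw, ← hS₀]
        simp
      have hredNew : IsRed ((X ++ S₀) ++ V₁) := by
        apply List.IsChain.append hredXS₀ ((isRed_toWord (P a b v)).suffix ⟨invRev C, d2.symm⟩)
        intro x hx y hy
        have hx' : x ∈ U₁.getLast? := by
          rw [List.getLast?_append_of_ne_nil (l₁ := X) hS₀ne] at hx
          rw [hU₁, List.getLast?_append_of_ne_nil (l₁ := T) hS₀ne]
          exact hx
        exact (List.isChain_append.1 hredU₁V₁).2.2 x hx' y hy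
      have hprodNew : (Prodw a b (w ++ [v])).toWord = (X ++ S₀) ++ V₁ := by
        rw [Prodw_append]
        have e1 : Prodw a b w = mk ((X ++ S₀) ++ C) := by
          rw [← mk_toWord (x := Prodw a b w), hPw, ← hS₀]
          simp
        have e2 : P a b v = mk (invRev C ++ V₁) := by
          rw [← mk_toWord (x := P a b v), d2]
        have e3 : mk ((X ++ S₀) ++ C) = mk (X ++ S₀) * mk C :=
          (mul_mk (L₁ := X ++ S₀) (L₂ := C)).symm
        have e4 : mk (invRev C ++ V₁) = (mk C)⁻¹ * mk V₁ := by
          rw [inv_mk, mul_mk]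
        rw [e1, e2, e3, e4]
        have e5 : mk (X ++ S₀) * mk C * ((mk C)⁻¹ * mk V₁) = mk (X ++ S₀) * mk V₁ := by
          group
        rw [e5, mul_mk, toWord_mk_of_isRed hredNew]
      -- norms of old and new
      have nPw : FreeGroup.norm (Prodw a b w) = X.length + S.length := by
        rw [norm_eq_length, hPw]; simp
      have nNew : FreeGroup.norm (Prodw a b (w ++ [v])) = X.length + S₀.length + V₁.length := by
        rw [norm_eq_length, hprodNew]
        simp
        omega
      have hswallowIff : 2 * C.length = FreeGroup.norm (P a b v) ↔
          FreeGroup.norm (P a b u * P a b v) = FreeGroup.norm (P a b u) := by omega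
      refine ⟨v, X ++ S₀, V₁, List.getLast?_concat, hprodNew, hV₁ne,
        ⟨invRev C, d2.symm⟩, by omega, ?_, ?_, ?_⟩
      · -- e' = 0 : v exactly halved
        intro h2V
        have hsw : FreeGroup.norm (P a b u * P a b v) = FreeGroup.norm (P a b u) := by omega
        constructor
        · exact ⟨u, hcomp, hsw⟩
        · -- need : (w++[v]).length - 1 ≤ N new = N old
          -- old e must be 1
          have hne : 2 * S.length ≠ FreeGroup.norm (P a b u) := by
            intro h2S
            obtain ⟨⟨u', hc', hn'⟩, -⟩ := hE0 h2S
            exact HSW u' u v hc' hcomp ⟨hn', hsw⟩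
          have := hE1 hne
          simp only [List.length_append, List.length_singleton]
          omega
      · -- e' = 1 : strict growth
        intro h2V
        have hCltv : 2 * C.length < FreeGroup.norm (P a b v) := by omega
        simp only [List.length_append, List.length_singleton]
        by_cases h2S : 2 * S.length = FreeGroup.norm (P a b u)
        · -- old exactly halved: growth ≥ 2
          obtain ⟨⟨u', hc', hn'⟩, hlen'⟩ := hE0 h2S
          have hmin := H4 u' u hc' hn' v
          -- 2C < 2S = N Pu  (strict since C.length < S.length)
          omega
        · have := hE1 h2S
          omega
      · -- 2 ≤ len → 2 ≤ N
        intro _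
        by_cases hV : 2 * V₁.length = FreeGroup.norm (P a b v)
        · -- swallow step: N new = N old
          have hsw : FreeGroup.norm (P a b u * P a b v) = FreeGroup.norm (P a b u) := by omega
          have hne : 2 * S.length ≠ FreeGroup.norm (P a b u) := by
            intro h2S
            obtain ⟨⟨u', hc', hn'⟩, -⟩ := hE0 h2S
            exact HSW u' u v hc' hcomp ⟨hn', hsw⟩
          have hlen := hE1 hne
          -- if w.length ≥ 2 done; if w.length = 1 use N Pu ≥ N Pv = 2C ≥ 2
          rcases Nat.lt_or_ge w.length 2 with hl | hl
          · -- w.length = 1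
            have hw1 : w.length = 1 := by
              have : w.length ≠ 0 := fun h => hw (List.length_eq_zero_iff.mp h)
              omega
            have hCpos : 1 ≤ C.length := by
              by_contra hc
              push_neg at hc
              have : C.length = 0 := by omega
              have : FreeGroup.norm (P a b v) = 0 := by omega
              exact H0 v (FreeGroup.norm_eq_zero.mp this)
            omega
          · have := h2le hl
            omega
        · have hCltv : 2 * C.length < FreeGroup.norm (P a b v) := by omega
          have hwpos : 1 ≤ w.length := by
            have : w.length ≠ 0 := fun h => hw (List.length_eq_zero_iff.mp h)
            omega
          by_cases h2S : 2 * S.length = FreeGroup.norm (P a b u)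
          · obtain ⟨-, hlen'⟩ := hE0 h2S
            omega
          · have := hE1 h2S
            omega
-- PART F : sign helpers, mismatch and decomposition lemmas

def sgn (x : F2) (s : Bool) : F2 := cond s x x⁻¹

@[simp] theorem sgn_true (x : F2) : sgn x true = x := rfl
@[simp] theorem sgn_false (x : F2) : sgn x false = x⁻¹ := rfl

theorem P_eq_sgn (a b : F2) (l : Fin 2 × Bool) : P a b l = sgn (pick a b l.1) l.2 := rfl

theorem norm_sgn (x : F2) (s : Bool) : FreeGroup.norm (sgn x s) = FreeGroup.norm x := by
  cases s
  · exact FreeGroup.norm_inv_eq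
  · rfl

theorem sgn_ne_one {x : F2} (hx : x ≠ 1) (s : Bool) : sgn x s ≠ 1 := by
  cases s
  · simpa using hx
  · simpa using hx

theorem sgn_not (x : F2) (s : Bool) : sgn x (!s) = (sgn x s)⁻¹ := by
  cases s <;> simp

/-- sign-mismatch configuration is impossible -/
theorem mismatch {a b : F2} (ha : a ≠ 1)
    (h1 : FreeGroup.norm (b * a) = FreeGroup.norm b)
    (h2 : FreeGroup.norm (a * b⁻¹) = FreeGroup.norm b) : False := by
  obtain ⟨B₂, E, A₁, e1, e2, e3⟩ := mul_decomp b a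
  obtain ⟨A₂, C, Y, f1, f2, f3⟩ := mul_decomp a b⁻¹
  -- lengths
  have nb : FreeGroup.norm b = B₂.length + E.length := by rw [norm_eq_length, e1]; simp
  have na : FreeGroup.norm a = E.length + A₁.length := by
    rw [norm_eq_length, e2]; simp [invRev_length]
  have nba : FreeGroup.norm (b * a) = B₂.length + A₁.length := by
    rw [norm_eq_length, e3]; simp
  have na' : FreeGroup.norm a = A₂.length + C.length := by rw [norm_eq_length, f1]; simp
  have nbi : FreeGroup.norm b = C.length + Y.length := by
    have : FreeGroup.norm b⁻¹ = C.length + Y.length := by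
      rw [norm_eq_length, f2]; simp [invRev_length]
    rwa [FreeGroup.norm_inv_eq] at this
  have nabi : FreeGroup.norm (a * b⁻¹) = A₂.length + Y.length := by
    rw [norm_eq_length, f3]; simp
  have hEA : A₁.length = E.length := by omega
  have hAC : A₂.length = C.length := by omega
  have hEC : E.length = C.length := by omega
  -- b ends with E and with C
  have hbE : E <:+ b.toWord := ⟨B₂, e1.symm⟩
  have hbC : C <:+ b.toWord := by
    have h5 := congrArg invRev f2
    rw [invRev_append', invRev_invRev, FreeGroup.toWord_inv, invRev_invRev] at h5
    exact ⟨invRev Y, h5.symm⟩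
  have hECeq : E = C := by
    have h := suffix_of_suffix_le hbE hbC (le_of_eq hEC)
    exact h.eq_of_length hEC
  -- a = invRev E ++ A₁ = A₂ ++ C  with |invRev E| = |A₂|
  have haa : invRev E ++ A₁ = A₂ ++ C := by rw [← e2, ← f1]
  have hsplit : invRev E = A₂ ∧ A₁ = C := by
    apply List.append_inj haa
    rw [invRev_length]
    omega
  -- a.toWord = invRev E ++ E, junction contradiction
  have haE : a.toWord = invRev E ++ E := by rw [e2, hsplit.2, hECeq]
  have hEne : E ≠ [] := by
    intro h
    rw [h] at haE
    simp [invRev] at haE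
    exact ha haE
  rcases E with _ | ⟨e, E'⟩
  · exact hEne rfl
  have hw : a.toWord = invRev E' ++ [(e.1, !e.2), e] ++ E' := by
    rw [haE, invRev_cons']
    simp
  have := (isRed_toWord a).infix (L' := [(e.1, !e.2), e]) ⟨invRev E', E', by rw [hw]⟩
  have hcp := List.isChain_cons_cons.1 this |>.1
  simp [Compat] at hcp

/-- the double-swallow configuration decomposition -/
theorem config_decomp {a b : F2} (ha : a ≠ 1) (hmn : FreeGroup.norm a ≤ FreeGroup.norm b)
    (h1 : FreeGroup.norm (b * a) = FreeGroup.norm b)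
    (h2 : FreeGroup.norm (a * b) = FreeGroup.norm b) :
    ∃ p q s : F2, a = p * q ∧ b = q⁻¹ * s * p⁻¹ ∧
      FreeGroup.norm (q * p) ≤ FreeGroup.norm a ∧
      FreeGroup.norm s + FreeGroup.norm a = FreeGroup.norm b := by
  obtain ⟨B₂, E, A₁, e1, e2, e3⟩ := mul_decomp b a
  obtain ⟨A₂, C, Y, f1, f2, f3⟩ := mul_decomp a b
  have nb : FreeGroup.norm b = B₂.length + E.length := by rw [norm_eq_length, e1]; simp
  have na : FreeGroup.norm a = E.length + A₁.length := by
    rw [norm_eq_length, e2]; simp [invRev_length]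
  have nba : FreeGroup.norm (b * a) = B₂.length + A₁.length := by
    rw [norm_eq_length, e3]; simp
  have na' : FreeGroup.norm a = A₂.length + C.length := by rw [norm_eq_length, f1]; simp
  have nb' : FreeGroup.norm b = C.length + Y.length := by
    rw [norm_eq_length, f2]; simp [invRev_length]
  have nab : FreeGroup.norm (a * b) = A₂.length + Y.length := by
    rw [norm_eq_length, f3]; simp
  have hEA : A₁.length = E.length := by omega
  have hAC : A₂.length = C.length := by omega
  -- split a : A₂ = invRev E, A₁ = C
  have haa : invRev E ++ A₁ = A₂ ++ C := by rw [← e2, ← f1]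
  have hsplit : invRev E = A₂ ∧ A₁ = C := by
    apply List.append_inj haa
    rw [invRev_length]
    omega
  -- split b : toWord b = invRev C ++ M ++ E
  have hbb : invRev C ++ Y = B₂ ++ E := by rw [← f2, ← e1]
  have hpre : invRev C <+: B₂ := by
    have p1 : invRev C <+: b.toWord := ⟨Y, f2.symm⟩
    have p2 : B₂ <+: b.toWord := ⟨E, e1.symm⟩
    rcases List.prefix_or_prefix_of_prefix p1 p2 with h | h
    · exact h
    · have hlen : B₂.length ≤ (invRev C).length := h.length_le
      rw [invRev_length] at hlen
      have : B₂.length = (invRev C).length := by rw [invRev_length]; omega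
      exact (h.eq_of_length this).symm ▸ List.prefix_refl _
  obtain ⟨M, hM⟩ := hpre
  have hY : Y = M ++ E := by
    have h6 : invRev C ++ Y = invRev C ++ (M ++ E) := by
      rw [hbb, ← hM, List.append_assoc]
    exact List.append_cancel_left h6
  -- define the pieces
  refine ⟨mk (invRev E), mk C, mk M, ?_, ?_, ?_, ?_⟩
  · rw [← mk_toWord (x := a), e2, hsplit.2, ← mul_mk]
  · rw [← mk_toWord (x := b), f2, hY]
    rw [inv_mk (L := C), show ((mk (invRev E) : F2)⁻¹ = mk E) from by rw [inv_mk, invRev_invRev]]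
    rw [mul_mk, mul_mk]
    congr 1
    simp
  · calc FreeGroup.norm (mk C * mk (invRev E)) ≤ _ := FreeGroup.norm_mul_le _ _
      _ ≤ FreeGroup.norm a := by
        have hCred : IsRed C := (isRed_toWord a).suffix ⟨A₂, f1.symm⟩
        have hEred : IsRed (invRev E) := (isRed_toWord a).prefix ⟨A₁, e2.symm⟩
        rw [norm_mk_of_isRed hCred, norm_mk_of_isRed hEred, invRev_length]
        omega
  · have hMred : IsRed M := by
      apply (isRed_toWord b).infix
      exact ⟨invRev C, E, by rw [f2, hY]; simp⟩
    rw [norm_mk_of_isRed hMred]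
    have hMlen : C.length + M.length + E.length = FreeGroup.norm b := by
      have := congrArg List.length hM
      simp [invRev_length] at this
      omega
    omega
-- PART G : swallow facts, words expression, the "no such basis" contradiction

theorem swallow_facts {x y : F2}
    (hx : FreeGroup.norm x ≤ FreeGroup.norm (x * y))
    (hy : FreeGroup.norm y ≤ FreeGroup.norm (x * y))
    (hsw : FreeGroup.norm (x * y) = FreeGroup.norm x) :
    Even (FreeGroup.norm y) ∧ FreeGroup.norm y ≤ FreeGroup.norm x := by
  obtain ⟨X, C, Y, d1, d2, d3⟩ := mul_decomp x y
  have n1 : FreeGroup.norm x = X.length + C.length := by rw [norm_eq_length, d1]; simp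
  have n2 : FreeGroup.norm y = C.length + Y.length := by
    rw [norm_eq_length, d2]; simp [invRev_length]
  have n3 : FreeGroup.norm (x * y) = X.length + Y.length := by rw [norm_eq_length, d3]; simp
  exact ⟨⟨C.length, by omega⟩, by omega⟩

@[simp] theorem P_zero (a b : F2) (s : Bool) : P a b ((0 : Fin 2), s) = sgn a s := by
  cases s <;> rfl

@[simp] theorem P_one (a b : F2) (s : Bool) : P a b ((1 : Fin 2), s) = sgn b s := by
  cases s <;> rfl

theorem hom_prodw {a b : F2} (φ : F2 ≃* F2) (h0 : φ (FreeGroup.of 0) = a)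
    (h1 : φ (FreeGroup.of 1) = b) : ∀ L, φ (mk L) = Prodw a b L := by
  intro L
  induction L with
  | nil =>
    show φ 1 = _
    simp [Prodw]
  | cons l L ih =>
    have hsplit : mk (l :: L) = mk [l] * mk L := by rw [mul_mk]; rfl
    have hlet : φ (mk [l]) = P a b l := by
      rcases l with ⟨i, s⟩
      have hof : φ (FreeGroup.of i) = pick a b i := by
        fin_cases i
        · simpa [pick] using h0
        · simpa [pick] using h1
      cases s
      · show φ ((FreeGroup.of i)⁻¹) = _
        rw [_root_.map_inv, hof]
        rfl
      · show φ (FreeGroup.of i) = _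
        rw [hof]
        rfl
    rw [hsplit, _root_.map_mul, hlet, ih]
    show _ = (List.map (P a b) (l :: L)).prod
    rw [List.map_cons, List.prod_cons]
    rfl

theorem of0_ne_of1 : (FreeGroup.of (0 : Fin 2)) ≠ FreeGroup.of 1 := by
  intro h
  have := FreeGroup.of_injective h
  exact absurd this (by decide)

theorem of0_ne_of1_inv : (FreeGroup.of (0 : Fin 2)) ≠ (FreeGroup.of 1)⁻¹ := by
  intro h
  have := congrArg FreeGroup.toWord h
  rw [FreeGroup.toWord_of, FreeGroup.toWord_inv, FreeGroup.toWord_of] at this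
  simp [invRev] at this

theorem of1_ne_of0_inv : (FreeGroup.of (1 : Fin 2)) ≠ (FreeGroup.of 0)⁻¹ := by
  intro h
  have := congrArg FreeGroup.toWord h
  rw [FreeGroup.toWord_of, FreeGroup.toWord_inv, FreeGroup.toWord_of] at this
  simp [invRev] at this

theorem no_basis {a b : F2} (hb : IsBasisPair a b)
    (H0 : ∀ l, P a b l ≠ 1)
    (H1 : ∀ u v, Compat u v →
      FreeGroup.norm (P a b u) ≤ FreeGroup.norm (P a b u * P a b v) ∧
      FreeGroup.norm (P a b v) ≤ FreeGroup.norm (P a b u * P a b v))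
    (HDS : ∀ u' u v, Compat u' u → Compat u v →
      ¬(FreeGroup.norm (P a b u' * P a b u) = FreeGroup.norm (P a b u') ∧
        FreeGroup.norm (P a b u * P a b v) = FreeGroup.norm (P a b v)))
    (HSW : ∀ u' u v, Compat u' u → Compat u v →
      ¬(FreeGroup.norm (P a b u' * P a b u) = FreeGroup.norm (P a b u') ∧
        FreeGroup.norm (P a b u * P a b v) = FreeGroup.norm (P a b u)))
    (H4 : ∀ u' u, Compat u' u →
      FreeGroup.norm (P a b u' * P a b u) = FreeGroup.norm (P a b u') →
      ∀ l, FreeGroup.norm (P a b u) ≤ FreeGroup.norm (P a b l))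
    (hn : ¬(FreeGroup.norm a = 1 ∧ FreeGroup.norm b = 1)) : False := by
  obtain ⟨φ, h0, h1⟩ := hb
  have key : ∀ i : Fin 2, ∃ l, FreeGroup.of i = P a b l := by
    intro i
    have hg : φ.symm (FreeGroup.of i) ≠ 1 := by
      intro h
      have h2 : FreeGroup.of i = φ 1 := by
        rw [← h, MulEquiv.apply_symm_apply]
      rw [_root_.map_one] at h2
      exact FreeGroup.of_ne_one i h2
    set L := (φ.symm (FreeGroup.of i)).toWord with hL
    have hLred : IsRed L := isRed_toWord _
    have hLne : L ≠ [] := fun h => hg (toWord_eq_nil_iff.mp h)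
    have hofi : FreeGroup.of i = Prodw a b L := by
      rw [← hom_prodw φ h0 h1 L, hL, mk_toWord, MulEquiv.apply_symm_apply]
    have hlen : L.length < 2 := by
      by_contra hcon
      push_neg at hcon
      obtain ⟨u, X, S, -, -, -, -, -, -, -, h2⟩ := surv H0 H1 HDS HSW H4 L hLred hLne
      have h3 := h2 hcon
      rw [← hofi] at h3
      rw [FreeGroup.norm_of] at h3
      omega
    rcases L with _ | ⟨l, L'⟩
    · exact absurd rfl hLne
    · rcases L' with _ | ⟨l', L''⟩
      · exact ⟨l, by rw [hofi, Prodw_single]⟩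
      · exfalso
        simp only [List.length_cons] at hlen
        omega
  obtain ⟨⟨i0, s0⟩, hl0⟩ := key 0
  obtain ⟨⟨i1, s1⟩, hl1⟩ := key 1
  have fin2 : ∀ i : Fin 2, i = 0 ∨ i = 1 := by decide
  rcases fin2 i0 with rfl | rfl <;> rcases fin2 i1 with rfl | rfl
  · -- both a-type
    rw [P_zero] at hl0 hl1
    cases s0 <;> cases s1 <;> simp only [sgn_true, sgn_false] at hl0 hl1
    · exact of0_ne_of1 (by rw [hl0, hl1])
    · exact of0_ne_of1_inv (by rw [hl0, ← hl1])
    · exact of1_ne_of0_inv (by rw [hl1, ← hl0])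
    · exact of0_ne_of1 (by rw [hl0, hl1])
  · -- a-type, b-type : both length 1
    rw [P_zero] at hl0
    rw [P_one] at hl1
    apply hn
    constructor
    · have := congrArg FreeGroup.norm hl0
      rw [FreeGroup.norm_of, norm_sgn] at this
      omega
    · have := congrArg FreeGroup.norm hl1
      rw [FreeGroup.norm_of, norm_sgn] at this
      omega
  · -- b-type, a-type
    rw [P_one] at hl0
    rw [P_zero] at hl1
    apply hn
    constructor
    · have := congrArg FreeGroup.norm hl1
      rw [FreeGroup.norm_of, norm_sgn] at this
      omega
    · have := congrArg FreeGroup.norm hl0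
      rw [FreeGroup.norm_of, norm_sgn] at this
      omega
  · -- both b-type
    rw [P_one] at hl0 hl1
    cases s0 <;> cases s1 <;> simp only [sgn_true, sgn_false] at hl0 hl1
    · exact of0_ne_of1 (by rw [hl0, hl1])
    · exact of0_ne_of1_inv (by rw [hl0, ← hl1])
    · exact of1_ne_of0_inv (by rw [hl1, ← hl0])
    · exact of0_ne_of1 (by rw [hl0, hl1])
-- PART H : the core of the induction

theorem IsBasisPair.mula' {a b : F2} (h : IsBasisPair a b) : IsBasisPair (b * a) b := by
  have h3 := h.inva.invb.mula.inva
  rw [mul_inv_rev, inv_inv, inv_inv] at h3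
  have h4 := h3.invb
  rwa [inv_inv] at h4

theorem IsBasisPair.mulb' {a b : F2} (h : IsBasisPair a b) : IsBasisPair a (a * b) :=
  h.swap.mula'.swap

theorem fin2_cases : ∀ i : Fin 2, i = 0 ∨ i = 1 := by decide

theorem core {a b : F2}
    (IH : ∀ a' b' : F2, FreeGroup.norm a' + FreeGroup.norm b' <
        FreeGroup.norm a + FreeGroup.norm b → IsBasisPair a' b' → Qp a' b')
    (hb : IsBasisPair a b)
    (hmn : FreeGroup.norm a ≤ FreeGroup.norm b)
    (HN1 : ∀ s t : Bool,
      max (FreeGroup.norm a) (FreeGroup.norm b) ≤ FreeGroup.norm (sgn a s * sgn b t) ∧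
      max (FreeGroup.norm a) (FreeGroup.norm b) ≤ FreeGroup.norm (sgn b s * sgn a t))
    (hnot : ¬(FreeGroup.norm a = 1 ∧ FreeGroup.norm b = 1)) : Qp a b := by
  obtain ⟨ha1, hb1⟩ := hb.ne_one
  have hm1 : 1 ≤ FreeGroup.norm a := by
    rcases Nat.eq_zero_or_pos (FreeGroup.norm a) with h | h
    · exact absurd (FreeGroup.norm_eq_zero.mp h) ha1
    · exact h
  have hn2 : 2 ≤ FreeGroup.norm b := by
    rcases Nat.lt_or_ge (FreeGroup.norm b) 2 with h | h
    · exfalso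
      apply hnot
      have hbn1 : 1 ≤ FreeGroup.norm b := by
        rcases Nat.eq_zero_or_pos (FreeGroup.norm b) with h' | h'
        · exact absurd (FreeGroup.norm_eq_zero.mp h') hb1
        · exact h'
      omega
    · exact h
  -- discharge H0, H1
  have H0 : ∀ l, P a b l ≠ 1 := by
    rintro ⟨i, s⟩
    rcases fin2_cases i with rfl | rfl
    · rw [P_zero]; exact sgn_ne_one ha1 s
    · rw [P_one]; exact sgn_ne_one hb1 s
  have hcompat_same : ∀ (i : Fin 2) (s t : Bool), Compat (i, s) (i, t) → s = t := by
    intro i s t hc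
    simp only [Compat] at hc
    cases s <;> cases t <;> simp_all
  have hsq : ∀ x : F2, x ≠ 1 → FreeGroup.norm x ≤ FreeGroup.norm (x * x) :=
    fun x hx => le_of_lt (norm_lt_norm_sq hx)
  have H1 : ∀ u v, Compat u v →
      FreeGroup.norm (P a b u) ≤ FreeGroup.norm (P a b u * P a b v) ∧
      FreeGroup.norm (P a b v) ≤ FreeGroup.norm (P a b u * P a b v) := by
    rintro ⟨i, s⟩ ⟨j, t⟩ hc
    rcases fin2_cases i with rfl | rfl <;> rcases fin2_cases j with rfl | rfl
    · have hst := hcompat_same 0 s t hc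
      subst hst
      rw [P_zero]
      exact ⟨hsq _ (sgn_ne_one ha1 s), hsq _ (sgn_ne_one ha1 s)⟩
    · rw [P_zero, P_one]
      have h := (HN1 s t).1
      exact ⟨le_trans (by rw [norm_sgn]; exact le_max_left _ _) h,
             le_trans (by rw [norm_sgn]; exact le_max_right _ _) h⟩
    · rw [P_zero, P_one]
      have h := (HN1 s t).2
      exact ⟨le_trans (by rw [norm_sgn]; exact le_max_right _ _) h,
             le_trans (by rw [norm_sgn]; exact le_max_left _ _) h⟩
    · have hst := hcompat_same 1 s t hc
      subst hst
      rw [P_one]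
      exact ⟨hsq _ (sgn_ne_one hb1 s), hsq _ (sgn_ne_one hb1 s)⟩
  have hswal : ∀ u v, Compat u v →
      FreeGroup.norm (P a b u * P a b v) = FreeGroup.norm (P a b u) →
      Even (FreeGroup.norm (P a b v)) ∧
      FreeGroup.norm (P a b v) ≤ FreeGroup.norm (P a b u) := by
    intro u v hc hs
    have h := H1 u v hc
    exact swallow_facts h.1 h.2 hs
  have hnormP : ∀ l : Fin 2 × Bool, FreeGroup.norm (P a b l) = FreeGroup.norm a ∨
      FreeGroup.norm (P a b l) = FreeGroup.norm b := by
    rintro ⟨i, s⟩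
    rcases fin2_cases i with rfl | rfl
    · left; rw [P_zero, norm_sgn]
    · right; rw [P_one, norm_sgn]
  by_cases hme : Even (FreeGroup.norm a)
  · -- a even ⇒ b odd
    have hbo : ¬ Even (FreeGroup.norm b) := by
      intro h
      exact not_both_even hb ⟨hme, h⟩
    have hmln : FreeGroup.norm a < FreeGroup.norm b := by
      rcases Nat.lt_or_ge (FreeGroup.norm a) (FreeGroup.norm b) with h | h
      · exact h
      · exfalso
        have : FreeGroup.norm a = FreeGroup.norm b := by omega
        rw [this] at hme
        exact hbo hme
    -- swallowed elements are a-type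
    have hswal_a : ∀ u v, Compat u v →
        FreeGroup.norm (P a b u * P a b v) = FreeGroup.norm (P a b u) →
        v.1 = 0 := by
      rintro u ⟨j, t⟩ hc hs
      rcases fin2_cases j with rfl | rfl
      · rfl
      · exfalso
        obtain ⟨hev, -⟩ := hswal u (1, t) hc hs
        rw [P_one, norm_sgn] at hev
        exact hbo hev
    by_cases hconf : ∃ ε s t : Bool,
        FreeGroup.norm (sgn b s * sgn a ε) = FreeGroup.norm b ∧
        FreeGroup.norm (sgn a ε * sgn b t) = FreeGroup.norm b
    · -- configuration exists : descend by conjugation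
      obtain ⟨ε, s, t, hc1, hc2⟩ := hconf
      by_cases hts : t = s
      · subst hts
        -- good case
        have ha₁ : sgn a ε ≠ 1 := sgn_ne_one ha1 ε
        have hmn₁ : FreeGroup.norm (sgn a ε) ≤ FreeGroup.norm (sgn b t) := by
          rw [norm_sgn, norm_sgn]; exact hmn
        have hc1' : FreeGroup.norm (sgn b t * sgn a ε) = FreeGroup.norm (sgn b t) := by
          rw [norm_sgn]; exact hc1
        have hc2' : FreeGroup.norm (sgn a ε * sgn b t) = FreeGroup.norm (sgn b t) := by
          rw [norm_sgn]; exact hc2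
        obtain ⟨p, q, s₂, hd1, hd2, hd3, hd4⟩ := config_decomp ha₁ hmn₁ hc1' hc2'
        have basis₁ : IsBasisPair (sgn a ε) (sgn b t) := by
          cases ε <;> cases t <;> simp only [sgn_true, sgn_false]
          · exact hb.inva.invb
          · exact hb.inva
          · exact hb.invb
          · exact hb
        have basis₂ : IsBasisPair (sgn a ε) (sgn a ε * sgn b t) := basis₁.mulb'
        have basis₃ := basis₂.conj p
        have heq1 : p⁻¹ * sgn a ε * p = q * p := by rw [hd1]; group
        have heq2 : p⁻¹ * (sgn a ε * sgn b t) * p = s₂ := by rw [hd1, hd2]; group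
        rw [heq1, heq2] at basis₃
        have hlt : FreeGroup.norm (q * p) + FreeGroup.norm s₂ <
            FreeGroup.norm a + FreeGroup.norm b := by
          rw [norm_sgn] at hd3 hd4
          omega
        have hq := IH _ _ hlt basis₃
        rw [← heq1, ← heq2] at hq
        have hq2 := (hq.unconj p).of_mulb'
        cases ε <;> cases t <;> simp only [sgn_true, sgn_false] at hq2
        · exact hq2.of_inva.of_invb
        · exact hq2.of_inva
        · exact hq2.of_invb
        · exact hq2
      · -- sign mismatch : impossible
        exfalso
        have htns : t = !s := by
          cases t <;> cases s <;> simp_all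
        subst htns
        rw [sgn_not] at hc2
        have hc1' : FreeGroup.norm (sgn b s * sgn a ε) = FreeGroup.norm (sgn b s) := by
          rw [norm_sgn]; exact hc1
        have hc2' : FreeGroup.norm (sgn a ε * (sgn b s)⁻¹) = FreeGroup.norm (sgn b s) := by
          rw [norm_sgn]; exact hc2
        exact mismatch (sgn_ne_one ha1 ε) hc1' hc2'
    · -- no configuration : Nielsen-reduced basis, contradiction
      exfalso
      push_neg at hconf
      have HDS : ∀ u' u v, Compat u' u → Compat u v →
          ¬(FreeGroup.norm (P a b u' * P a b u) = FreeGroup.norm (P a b u') ∧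
            FreeGroup.norm (P a b u * P a b v) = FreeGroup.norm (P a b v)) := by
        rintro ⟨i', s'⟩ ⟨i, s⟩ ⟨j, t⟩ hc1 hc2 ⟨e1, e2⟩
        have hu0 : i = 0 := hswal_a _ _ hc1 e1
        subst hu0
        have hi' : i' = 1 := by
          rcases fin2_cases i' with rfl | rfl
          · exfalso
            have hss := hcompat_same 0 s' s hc1
            subst hss
            rw [P_zero] at e1
            exact absurd e1 (ne_of_gt (norm_lt_norm_sq (sgn_ne_one ha1 s')))
          · rfl
        subst hi'
        have hj : j = 1 := by
          rcases fin2_cases j with rfl | rfl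
          · exfalso
            have hss := hcompat_same 0 s t hc2
            subst hss
            rw [P_zero] at e2
            exact absurd e2 (ne_of_gt (norm_lt_norm_sq (sgn_ne_one ha1 s)))
          · rfl
        subst hj
        rw [P_zero, P_one] at e1 e2
        rw [norm_sgn] at e1 e2
        exact hconf s s' t e1 e2
      have HSW : ∀ u' u v, Compat u' u → Compat u v →
          ¬(FreeGroup.norm (P a b u' * P a b u) = FreeGroup.norm (P a b u') ∧
            FreeGroup.norm (P a b u * P a b v) = FreeGroup.norm (P a b u)) := by
        rintro ⟨i', s'⟩ ⟨i, s⟩ ⟨j, t⟩ hc1 hc2 ⟨e1, e2⟩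
        have hu0 : i = 0 := hswal_a _ _ hc1 e1
        subst hu0
        have hj : j = 0 := hswal_a _ _ hc2 e2
        subst hj
        have hss := hcompat_same 0 s t hc2
        subst hss
        rw [P_zero] at e2
        exact absurd e2 (ne_of_gt (norm_lt_norm_sq (sgn_ne_one ha1 s)))
      have H4 : ∀ u' u, Compat u' u →
          FreeGroup.norm (P a b u' * P a b u) = FreeGroup.norm (P a b u') →
          ∀ l, FreeGroup.norm (P a b u) ≤ FreeGroup.norm (P a b l) := by
        rintro ⟨i', s'⟩ ⟨i, s⟩ hc1 e1 l
        have hu0 : i = 0 := hswal_a _ _ hc1 e1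
        subst hu0
        rw [P_zero, norm_sgn]
        rcases hnormP l with h | h <;> omega
      exact no_basis hb H0 H1 HDS HSW H4 hnot
  · -- a odd : no swallowing at all
    exfalso
    have hnosw : ∀ u v, Compat u v →
        FreeGroup.norm (P a b u * P a b v) ≠ FreeGroup.norm (P a b u) := by
      rintro ⟨i, s⟩ ⟨j, t⟩ hc hs
      obtain ⟨hev, hle⟩ := hswal _ _ hc hs
      rcases fin2_cases j with rfl | rfl
      · rw [P_zero, norm_sgn] at hev
        exact hme hev
      · rw [P_one, norm_sgn] at hev hle
        rcases fin2_cases i with rfl | rfl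
        · rw [P_zero, norm_sgn] at hle
          have : FreeGroup.norm a = FreeGroup.norm b := le_antisymm hmn hle
          rw [← this] at hev
          exact hme hev
        · have hss := hcompat_same 1 s t hc
          subst hss
          rw [P_one] at hs
          exact absurd hs (ne_of_gt (norm_lt_norm_sq (sgn_ne_one hb1 s)))
    have HDS : ∀ u' u v, Compat u' u → Compat u v →
        ¬(FreeGroup.norm (P a b u' * P a b u) = FreeGroup.norm (P a b u') ∧
          FreeGroup.norm (P a b u * P a b v) = FreeGroup.norm (P a b v)) :=
      fun u' u v hc1 _ h => hnosw u' u hc1 h.1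
    have HSW : ∀ u' u v, Compat u' u → Compat u v →
        ¬(FreeGroup.norm (P a b u' * P a b u) = FreeGroup.norm (P a b u') ∧
          FreeGroup.norm (P a b u * P a b v) = FreeGroup.norm (P a b u)) :=
      fun u' u v hc1 _ h => hnosw u' u hc1 h.1
    have H4 : ∀ u' u, Compat u' u →
        FreeGroup.norm (P a b u' * P a b u) = FreeGroup.norm (P a b u') →
        ∀ l, FreeGroup.norm (P a b u) ≤ FreeGroup.norm (P a b l) :=
      fun u' u hc1 e1 _ => absurd e1 (hnosw u' u hc1)
    exact no_basis hb H0 H1 HDS HSW H4 hnot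
-- PART I : the master theorem

theorem rev_of_norm_one {x : F2} (hx : FreeGroup.norm x = 1) : rev x = x := by
  apply toWord_injective
  rw [toWord_rev]
  rw [norm_eq_length] at hx
  obtain ⟨l, hl⟩ := List.length_eq_one_iff.mp hx
  rw [hl]
  rfl

theorem norm_anti (x y : F2) : FreeGroup.norm (y⁻¹ * x⁻¹) = FreeGroup.norm (x * y) := by
  rw [← mul_inv_rev, FreeGroup.norm_inv_eq]

theorem basis_qp : ∀ (N : ℕ) (a b : F2), FreeGroup.norm a + FreeGroup.norm b ≤ N →
    IsBasisPair a b → Qp a b := by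
  intro N
  induction N using Nat.strong_induction_on with
  | _ N IHN =>
  intro a b hN hb
  have IH : ∀ a' b' : F2, FreeGroup.norm a' + FreeGroup.norm b' <
      FreeGroup.norm a + FreeGroup.norm b → IsBasisPair a' b' → Qp a' b' := by
    intro a' b' h hb'
    exact IHN (FreeGroup.norm a' + FreeGroup.norm b') (by omega) a' b' le_rfl hb'
  by_cases h11 : FreeGroup.norm a = 1 ∧ FreeGroup.norm b = 1
  · refine ⟨1, rev_one, ?_, ?_⟩
    · rw [rev_of_norm_one h11.1]; group
    · rw [rev_of_norm_one h11.2]; group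
  by_cases r1 : FreeGroup.norm (a * b) < FreeGroup.norm a
  · have hq := IH (a * b) b (by omega) hb.mula
    exact hq.of_mula
  by_cases r2 : FreeGroup.norm (a * b⁻¹) < FreeGroup.norm a
  · have hq := IH (a * b⁻¹) b⁻¹ (by rw [FreeGroup.norm_inv_eq]; omega) hb.invb.mula
    exact hq.of_mula.of_invb
  by_cases r3 : FreeGroup.norm (b⁻¹ * a) < FreeGroup.norm a
  · have hb3 := hb.inva.mula.inva
    rw [mul_inv_rev, inv_inv] at hb3
    have hq := IH _ _ (by omega) hb3
    have hq2 := hq.inva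
    rw [mul_inv_rev, inv_inv] at hq2
    exact hq2.of_mula.of_inva
  by_cases r4 : FreeGroup.norm (b * a) < FreeGroup.norm a
  · have hq := IH (b * a) b (by omega) hb.mula'
    exact hq.of_mula'
  by_cases r5 : FreeGroup.norm (b * a) < FreeGroup.norm b
  · have hq := IH a (b * a) (by omega) hb.mulb
    exact hq.of_mulb
  by_cases r6 : FreeGroup.norm (b * a⁻¹) < FreeGroup.norm b
  · have hb6 := hb.inva.mulb
    have hq := IH _ _ (by rw [FreeGroup.norm_inv_eq]; omega) hb6
    exact hq.of_mulb.of_inva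
  by_cases r7 : FreeGroup.norm (a * b) < FreeGroup.norm b
  · have hq := IH a (a * b) (by omega) hb.mulb'
    exact hq.of_mulb'
  by_cases r8 : FreeGroup.norm (a⁻¹ * b) < FreeGroup.norm b
  · have hb8 := hb.inva.mulb'
    have hq := IH _ _ (by rw [FreeGroup.norm_inv_eq]; omega) hb8
    exact hq.of_mulb'.of_inva
  -- now no elementary move reduces
  push_neg at r1 r2 r3 r4 r5 r6 r7 r8
  have eAB : FreeGroup.norm (a * b⁻¹) = FreeGroup.norm (b * a⁻¹) := by
    rw [← norm_anti b a⁻¹, inv_inv]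
  have eBA : FreeGroup.norm (b⁻¹ * a) = FreeGroup.norm (a⁻¹ * b) := by
    rw [← norm_anti a⁻¹ b, inv_inv]
  have eABi : FreeGroup.norm (a⁻¹ * b⁻¹) = FreeGroup.norm (b * a) := by
    rw [← norm_anti b a]
  have eBAi : FreeGroup.norm (b⁻¹ * a⁻¹) = FreeGroup.norm (a * b) := by
    rw [← norm_anti a b]
  have f1 : max (FreeGroup.norm a) (FreeGroup.norm b) ≤ FreeGroup.norm (a * b) :=
    max_le r1 r7
  have f2 : max (FreeGroup.norm a) (FreeGroup.norm b) ≤ FreeGroup.norm (a * b⁻¹) :=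
    max_le r2 (by rw [eAB]; exact r6)
  have f3 : max (FreeGroup.norm a) (FreeGroup.norm b) ≤ FreeGroup.norm (a⁻¹ * b) :=
    max_le (by rw [← eBA]; exact r3) r8
  have f4 : max (FreeGroup.norm a) (FreeGroup.norm b) ≤ FreeGroup.norm (a⁻¹ * b⁻¹) :=
    max_le (by rw [eABi]; exact r4) (by rw [eABi]; exact r5)
  have g1 : max (FreeGroup.norm a) (FreeGroup.norm b) ≤ FreeGroup.norm (b * a) :=
    max_le r4 r5
  have g2 : max (FreeGroup.norm a) (FreeGroup.norm b) ≤ FreeGroup.norm (b * a⁻¹) :=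
    max_le (by rw [← eAB]; exact r2) r6
  have g3 : max (FreeGroup.norm a) (FreeGroup.norm b) ≤ FreeGroup.norm (b⁻¹ * a) :=
    max_le r3 (by rw [eBA]; exact r8)
  have g4 : max (FreeGroup.norm a) (FreeGroup.norm b) ≤ FreeGroup.norm (b⁻¹ * a⁻¹) :=
    max_le (by rw [eBAi]; exact r1) (by rw [eBAi]; exact r7)
  have HN1 : ∀ s t : Bool,
      max (FreeGroup.norm a) (FreeGroup.norm b) ≤ FreeGroup.norm (sgn a s * sgn b t) ∧
      max (FreeGroup.norm a) (FreeGroup.norm b) ≤ FreeGroup.norm (sgn b s * sgn a t) := by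
    intro s t
    cases s <;> cases t <;> simp only [sgn_true, sgn_false]
    · exact ⟨f4, g4⟩
    · exact ⟨f3, g3⟩
    · exact ⟨f2, g2⟩
    · exact ⟨f1, g1⟩
  rcases le_total (FreeGroup.norm a) (FreeGroup.norm b) with hmn | hmn
  · exact core IH hb hmn HN1 h11
  · have HN1' : ∀ s t : Bool,
        max (FreeGroup.norm b) (FreeGroup.norm a) ≤ FreeGroup.norm (sgn b s * sgn a t) ∧
        max (FreeGroup.norm b) (FreeGroup.norm a) ≤ FreeGroup.norm (sgn a s * sgn b t) := by
      intro s t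
      rw [max_comm]
      exact ⟨(HN1 s t).2, (HN1 s t).1⟩
    have IH' : ∀ a' b' : F2, FreeGroup.norm a' + FreeGroup.norm b' <
        FreeGroup.norm b + FreeGroup.norm a → IsBasisPair a' b' → Qp a' b' := by
      intro a' b' h hb'
      exact IH a' b' (by omega) hb'
    exact (core IH' hb.swap hmn HN1' (fun h => h11 ⟨h.2, h.1⟩)).swap
end PalAux

/-- `w` is a primitive element: a member of some basis, i.e. the image of a basis
element under some automorphism. -/
def IsPrimitive {X : Type*} (w : FreeGroup X) : Prop :=
  ∃ (φ : FreeGroup X ≃* FreeGroup X) (x : X), φ (FreeGroup.of x) = w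

/-- every primitive element of the free group of rank 2 is a product of
at most two palindromes. -/
theorem primitive_is_product_of_two_palindromes (w : FreeGroup (Fin 2))
    (hw : IsPrimitive w) :
    ∃ p q : FreeGroup (Fin 2), IsPalindrome p ∧ IsPalindrome q ∧ w = p * q := by
  obtain ⟨φ, x, hx⟩ := hw
  have hbasis : PalAux.IsBasisPair (φ (FreeGroup.of 0)) (φ (FreeGroup.of 1)) := ⟨φ, rfl, rfl⟩
  obtain ⟨c, hc, hca, hcb⟩ := PalAux.basis_qp
    (FreeGroup.norm (φ (FreeGroup.of 0)) + FreeGroup.norm (φ (FreeGroup.of 1))) _ _ le_rfl hbasis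
  have hpal : ∀ y : FreeGroup (Fin 2), PalAux.rev y = y → IsPalindrome y := by
    intro y hy
    unfold IsPalindrome
    rw [← PalAux.toWord_rev, hy]
  have hrw : PalAux.rev w = c⁻¹ * w * c := by
    rcases PalAux.fin2_cases x with rfl | rfl
    · rw [← hx]; exact hca
    · rw [← hx]; exact hcb
  refine ⟨c, c⁻¹ * w, hpal c hc, hpal _ ?_, by group⟩
  rw [PalAux.rev_mul, hrw, PalAux.rev_inv, hc]
  group
end

section
/- The primitive width of an infinitely generated free group is two: every element is a product of two primitive elements, and not every element is primitive. -/
/-- Build an automorphism of the free group from two maps on generators that are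
mutually inverse after lifting. -/
def mkAut {X : Type*} (f g : X → FreeGroup X)
    (h1 : ∀ y, FreeGroup.lift g (f y) = FreeGroup.of y)
    (h2 : ∀ y, FreeGroup.lift f (g y) = FreeGroup.of y) :
    FreeGroup X ≃* FreeGroup X where
  toFun := FreeGroup.lift f
  invFun := FreeGroup.lift g
  left_inv := by
    intro w
    have : (FreeGroup.lift g).comp (FreeGroup.lift f) = MonoidHom.id _ := by
      apply FreeGroup.ext_hom
      intro a
      simp [h1]
    simpa using congrArg (fun h => h w) this
  right_inv := by
    intro w
    have : (FreeGroup.lift f).comp (FreeGroup.lift g) = MonoidHom.id _ := by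
      apply FreeGroup.ext_hom
      intro a
      simp [h2]
    simpa using congrArg (fun h => h w) this
  map_mul' := map_mul _

/-- A lift fixing all generators appearing in `w` fixes `w`. -/
lemma lift_fixes {X : Type*} [DecidableEq X] (h : X → FreeGroup X) (w : FreeGroup X)
    (hfix : ∀ a ∈ w.toWord, h a.1 = FreeGroup.of a.1) :
    FreeGroup.lift h w = w := by
  conv_lhs => rw [← FreeGroup.mk_toWord (x := w)]
  conv_rhs => rw [← FreeGroup.mk_toWord (x := w)]
  rw [FreeGroup.lift_mk]
  have : (FreeGroup.lift FreeGroup.of) (FreeGroup.mk w.toWord) = FreeGroup.mk w.toWord := by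
    have : (FreeGroup.lift (FreeGroup.of : X → FreeGroup X)) = MonoidHom.id _ := by
      apply FreeGroup.ext_hom; intro a; simp
    rw [this]; rfl
  rw [FreeGroup.lift_mk] at this
  rw [← this]
  congr 1
  apply List.map_congr_left
  intro a ha
  rw [hfix a ha]

/-- the primitive width of an infinitely generated free group is two:
every element is a product of two primitive elements, and not every element is
primitive. -/
theorem primitive_width_infinitely_generated {X : Type*} [Infinite X] :
    (∀ w : FreeGroup X, ∃ p q : FreeGroup X,
        IsPrimitive p ∧ IsPrimitive q ∧ w = p * q) ∧
    (∃ w : FreeGroup X, ¬ IsPrimitive w) := by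
  classical
  constructor
  · intro w
    -- choose a fresh letter x not occurring in w
    obtain ⟨x, hx⟩ := (w.toWord.map Prod.fst).toFinset.exists_notMem
    have hx' : ∀ a ∈ w.toWord, a.1 ≠ x := by
      intro a ha h
      exact hx (List.mem_toFinset.2 (h ▸ List.mem_map_of_mem (f := Prod.fst) ha))
    refine ⟨(FreeGroup.of x)⁻¹, FreeGroup.of x * w, ?_, ?_, by group⟩
    · -- (of x)⁻¹ is primitive via the involution swapping of x with its inverse
      set s : X → FreeGroup X := fun y => if y = x then (FreeGroup.of x)⁻¹ else FreeGroup.of y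
      have hs : ∀ y, FreeGroup.lift s (s y) = FreeGroup.of y := by
        intro y
        by_cases hy : y = x <;> simp [s, hy]
      exact ⟨mkAut s s hs hs, x, by simp [mkAut, s]⟩
    · -- of x * w is primitive
      set f : X → FreeGroup X := fun y => if y = x then FreeGroup.of x * w else FreeGroup.of y
      set g : X → FreeGroup X := fun y => if y = x then FreeGroup.of x * w⁻¹ else FreeGroup.of y
      have hfw : FreeGroup.lift f w = w :=
        lift_fixes f w (fun a ha => by simp [f, hx' a ha])
      have hgw : FreeGroup.lift g w = w :=
        lift_fixes g w (fun a ha => by simp [g, hx' a ha])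
      have h1 : ∀ y, FreeGroup.lift g (f y) = FreeGroup.of y := by
        intro y
        by_cases hy : y = x
        · simp only [f, hy, if_pos rfl, map_mul]
          rw [show FreeGroup.lift g (FreeGroup.of x) = g x from FreeGroup.lift_apply_of, hgw]
          simp [g]
        · simp [f, g, hy]
      have h2 : ∀ y, FreeGroup.lift f (g y) = FreeGroup.of y := by
        intro y
        by_cases hy : y = x
        · simp only [g, hy, if_pos rfl, map_mul]
          rw [show FreeGroup.lift f (FreeGroup.of x) = f x from FreeGroup.lift_apply_of]
          rw [map_inv, hfw]
          simp [f, mul_assoc]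
        · simp [f, g, hy]
      exact ⟨mkAut f g h1 h2, x, by simp [mkAut, f]⟩
  · refine ⟨1, ?_⟩
    rintro ⟨φ, x, hφ⟩
    have : FreeGroup.of x = (1 : FreeGroup X) := by
      have := congrArg φ.symm hφ
      simpa using this
    have h2 : (FreeGroup.of x).toWord = (1 : FreeGroup X).toWord := by rw [this]
    rw [FreeGroup.toWord_of, FreeGroup.toWord_one] at h2
    simp at h2
end
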